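/- arXiv:1203.0050 — 5 statements merged into one kernel-verified Lean document; each statement's English description precedes it below -/
import Mathlib

section
/- Let the strategy profile (M, r) of the Mafia Hitting Set Game be a pure Nash equilibrium and let v be a civilian (v ∈ V∖M). Then D(v) ≤ (d/(d−1))·c(v). -/
open Finset
open scoped Classical

namespace MafiaHS

variable {V : Type*} [Fintype V] [DecidableEq V]

noncomputable section

/-- The demand `D(v) = (1/(d-1)) ∑_{S ∋ v} ∑_{m ∈ (M∩S)∖{v}} r(m,S)` asked from agent `v`
in the Mafia Hitting Set Game. -/
def demand (d : ℕ) (E : Finset (Finset V)) (M : Finset V)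
    (r : V → Finset V → ℝ) (v : V) : ℝ :=
  (1 / ((d : ℝ) - 1)) * ∑ S ∈ E.filter (fun S => v ∈ S), ∑ m ∈ (M ∩ S).erase v, r m S

/-- A valid strategy profile of the Mafia Hitting Set Game: ransoms are nonnegative,
`r m S = 0` unless `m` is a mafioso belonging to the club `S ∈ 𝓔`, and every mafioso `m`
distributes exactly `c m` among the clubs containing him. -/
def ValidProfile (E : Finset (Finset V)) (c : V → ℝ)
    (M : Finset V) (r : V → Finset V → ℝ) : Prop :=
  (∀ m S, 0 ≤ r m S) ∧
  (∀ m S, m ∉ M ∨ m ∉ S ∨ S ∉ E → r m S = 0) ∧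
  (∀ m ∈ M, ∑ S ∈ E.filter (fun S => m ∈ S), r m S = c m)

/-- Utility of agent `v` in the Mafia Hitting Set Game.  A mafioso gets
`-c v + F⁺(v) - F⁻(v)` with `F⁻(v) = min(D v, c v)` and
`F⁺(v) = ∑_{S ∋ v} (r(v,S)/(d-1))·(|S∖(P∪{v})| + ∑_{u∈(S∩P)∖{v}} c u / D u)`,
where `P = {u ∈ M : D u > c u}` is the set of protected mafiosi.
A civilian gets `-D v` minus the penalty `T` if he belongs to an uncovered club. -/
def utility (d : ℕ) (E : Finset (Finset V)) (c : V → ℝ) (T : ℝ)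
    (M : Finset V) (r : V → Finset V → ℝ) (v : V) : ℝ :=
  if v ∈ M then
    -c v +
      (∑ S ∈ E.filter (fun S => v ∈ S),
        (r v S / ((d : ℝ) - 1)) *
          ((((S.filter fun u => ¬(u ∈ M ∧ c u < demand d E M r u)).erase v).card : ℝ) +
            ∑ u ∈ (S.filter fun u => u ∈ M ∧ c u < demand d E M r u).erase v,
              c u / demand d E M r u)) -
      min (demand d E M r v) (c v)
  else
    -demand d E M r v - (if ∃ S ∈ E, v ∈ S ∧ M ∩ S = ∅ then T else 0)

/-- `(M', r')` is a unilateral deviation of agent `v` from `(M, r)`: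
all other agents keep their strategies. -/
def Deviation (v : V) (M M' : Finset V) (r r' : V → Finset V → ℝ) : Prop :=
  (∀ u, u ≠ v → (u ∈ M' ↔ u ∈ M)) ∧ ∀ u S, u ≠ v → r' u S = r u S

/-- `(M, r)` is a pure Nash equilibrium of the Mafia Hitting Set Game: a valid profile such
that no agent can strictly increase his utility by a unilateral deviation. -/
def IsNashEq (d : ℕ) (E : Finset (Finset V)) (c : V → ℝ) (T : ℝ)
    (M : Finset V) (r : V → Finset V → ℝ) : Prop :=
  ValidProfile E c M r ∧
  ∀ (v : V) (M' : Finset V) (r' : V → Finset V → ℝ),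
    ValidProfile E c M' r' → Deviation v M M' r r' →
      utility d E c T M' r' v ≤ utility d E c T M r v

-- auxiliary lemmas, part 1
def fplus (d : ℕ) (E : Finset (Finset V)) (c : V → ℝ) (M : Finset V)
    (r : V → Finset V → ℝ) (m : V) : ℝ :=
  ∑ S ∈ E.filter (fun S => m ∈ S),
    (r m S / ((d : ℝ) - 1)) *
      ((((S.filter fun u => ¬(u ∈ M ∧ c u < demand d E M r u)).erase m).card : ℝ) +
        ∑ u ∈ (S.filter fun u => u ∈ M ∧ c u < demand d E M r u).erase m,
          c u / demand d E M r u)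

lemma utility_mem (d : ℕ) (E : Finset (Finset V)) (c : V → ℝ) (T : ℝ)
    (M : Finset V) (r : V → Finset V → ℝ) (m : V) (hm : m ∈ M) :
    utility d E c T M r m
      = -c m + fplus d E c M r m - min (demand d E M r m) (c m) := by
  simp only [utility, fplus, if_pos hm]

lemma utility_not_mem (d : ℕ) (E : Finset (Finset V)) (c : V → ℝ) (T : ℝ)
    (M : Finset V) (r : V → Finset V → ℝ) (m : V) (hm : m ∉ M) :
    utility d E c T M r m
      = -demand d E M r m - (if ∃ S ∈ E, m ∈ S ∧ M ∩ S = ∅ then T else 0) := by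
  simp only [utility, if_neg hm]

lemma demand_eq_of_deviation (d : ℕ) (E : Finset (Finset V)) {M M' : Finset V}
    {r r' : V → Finset V → ℝ} (v : V)
    (hM : ∀ u, u ≠ v → (u ∈ M' ↔ u ∈ M))
    (hr : ∀ u S, u ≠ v → r' u S = r u S) :
    demand d E M' r' v = demand d E M r v := by
  unfold demand
  congr 1
  refine Finset.sum_congr rfl fun S hS => ?_
  have hset : (M' ∩ S).erase v = (M ∩ S).erase v := by
    ext u
    simp only [mem_erase, mem_inter]
    constructor
    · rintro ⟨h1, h2, h3⟩; exact ⟨h1, (hM u h1).1 h2, h3⟩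
    · rintro ⟨h1, h2, h3⟩; exact ⟨h1, (hM u h1).2 h2, h3⟩
  rw [hset]
  exact Finset.sum_congr rfl fun m hm => hr m S (Finset.ne_of_mem_erase hm)

lemma demand_insert_eq (d : ℕ) (E : Finset (Finset V)) {M : Finset V}
    {r r' : V → Finset V → ℝ} {v u : V} (hvM : v ∉ M) (huv : u ≠ v)
    (hr : ∀ w S, w ≠ v → r' w S = r w S)
    (hv0 : ∀ S, v ∉ S → r' v S = 0) :
    demand d E (insert v M) r' u
      = demand d E M r u
        + (1 / ((d:ℝ) - 1)) * ∑ S ∈ E.filter (fun S => u ∈ S), r' v S := by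
  unfold demand
  rw [← mul_add]
  congr 1
  rw [← Finset.sum_add_distrib]
  refine Finset.sum_congr rfl fun S hS => ?_
  by_cases hvS : v ∈ S
  · have h1 : (insert v M ∩ S).erase u = insert v ((M ∩ S).erase u) := by
      ext w
      simp only [mem_erase, mem_inter, mem_insert]
      constructor
      · rintro ⟨hwu, hw | hw, hwS⟩
        · exact Or.inl hw
        · exact Or.inr ⟨hwu, hw, hwS⟩
      · rintro (rfl | ⟨hwu, hw, hwS⟩)
        · exact ⟨huv.symm, Or.inl rfl, hvS⟩
        · exact ⟨hwu, Or.inr hw, hwS⟩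
    rw [h1, Finset.sum_insert (by simp [hvM] : v ∉ (M ∩ S).erase u)]
    have h2 : ∑ m ∈ (M ∩ S).erase u, r' m S = ∑ m ∈ (M ∩ S).erase u, r m S := by
      refine Finset.sum_congr rfl fun m hm => hr m S ?_
      intro h; subst h; exact hvM (Finset.mem_inter.1 (Finset.mem_of_mem_erase hm)).1
    rw [h2]; ring
  · have h1 : (insert v M ∩ S) = M ∩ S := by
      ext w
      simp only [mem_inter, mem_insert]
      constructor
      · rintro ⟨hw | hw, hwS⟩
        · exact absurd (hw ▸ hwS) hvS
        · exact ⟨hw, hwS⟩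
      · rintro ⟨hw, hwS⟩; exact ⟨Or.inr hw, hwS⟩
    rw [h1, hv0 S hvS]
    have h2 : ∑ m ∈ (M ∩ S).erase u, r' m S = ∑ m ∈ (M ∩ S).erase u, r m S := by
      refine Finset.sum_congr rfl fun m hm => hr m S ?_
      intro h; subst h; exact hvM (Finset.mem_inter.1 (Finset.mem_of_mem_erase hm)).1
    rw [h2]; ring

lemma card_partition_erase {S : Finset V} {x : V} (hx : x ∈ S) (p : V → Prop) :
    ((S.filter p).erase x).card + ((S.filter (fun u => ¬ p u)).erase x).card
      = S.card - 1 := by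
  have hunion : ((S.filter p).erase x) ∪ ((S.filter (fun u => ¬ p u)).erase x)
      = S.erase x := by
    ext u
    simp only [mem_union, mem_erase, mem_filter]
    constructor
    · rintro (⟨h1, h2, _⟩ | ⟨h1, h2, _⟩) <;> exact ⟨h1, h2⟩
    · rintro ⟨h1, h2⟩
      by_cases hp : p u
      · exact Or.inl ⟨h1, h2, hp⟩
      · exact Or.inr ⟨h1, h2, hp⟩
  have hdisj : Disjoint ((S.filter p).erase x) ((S.filter (fun u => ¬ p u)).erase x) := by
    rw [Finset.disjoint_left]
    intro a ha hb
    exact (Finset.mem_filter.1 (Finset.mem_of_mem_erase hb)).2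
      (Finset.mem_filter.1 (Finset.mem_of_mem_erase ha)).2
  rw [← Finset.card_union_of_disjoint hdisj, hunion, Finset.card_erase_of_mem hx]

lemma demand_mul (d : ℕ) (E : Finset (Finset V)) (M : Finset V)
    (r : V → Finset V → ℝ) (u : V) (hdne : ((d:ℝ) - 1) ≠ 0) :
    ((d:ℝ) - 1) * demand d E M r u
      = ∑ S ∈ E.filter (fun S => u ∈ S), ∑ m ∈ (M ∩ S).erase u, r m S := by
  unfold demand
  rw [← mul_assoc, mul_one_div, div_self hdne, one_mul]
lemma fplus_le_of (d : ℕ) (hd : 2 ≤ d) (E : Finset (Finset V))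
    (hunif : ∀ S ∈ E, S.card = d) (c : V → ℝ) (hc : ∀ v, 0 ≤ c v)
    (M : Finset V) (r : V → Finset V → ℝ)
    (hval : ValidProfile E c M r) (m : V) (hm : m ∈ M)
    {S₁ : Finset V} (hS₁ : S₁ ∈ E) (hmS₁ : m ∈ S₁)
    {u₁ : V} (hu₁M : u₁ ∈ M) (hu₁S : u₁ ∈ S₁) (hu₁m : u₁ ≠ m)
    (hu₁p : c u₁ < demand d E M r u₁) :
    fplus d E c M r m
      ≤ c m - (r m S₁ / ((d:ℝ)-1)) * (1 - c u₁ / demand d E M r u₁) := by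
  have hd1 : (1:ℝ) ≤ (d:ℝ) - 1 := by
    have : (2:ℝ) ≤ (d:ℝ) := by exact_mod_cast hd
    linarith
  have hdpos : (0:ℝ) < (d:ℝ) - 1 := by linarith
  set D := demand d E M r with hD
  set p : V → Prop := fun u => u ∈ M ∧ c u < D u with hp
  -- per-club bracket bound
  have hbr : ∀ S ∈ E, m ∈ S →
      ((((S.filter fun u => ¬ p u).erase m).card : ℝ)
        + ∑ u ∈ (S.filter p).erase m, c u / D u)
      ≤ ((d:ℝ) - 1) - ∑ u ∈ (S.filter p).erase m, (1 - c u / D u) := by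
    intro S hSE hmS
    have hunion : ((S.filter p).erase m) ∪ ((S.filter fun u => ¬ p u).erase m)
        = S.erase m := by
      ext u
      simp only [mem_union, mem_erase, mem_filter]
      constructor
      · rintro (⟨h1, h2, _⟩ | ⟨h1, h2, _⟩) <;> exact ⟨h1, h2⟩
      · rintro ⟨h1, h2⟩
        by_cases hpu : p u
        · exact Or.inl ⟨h1, h2, hpu⟩
        · exact Or.inr ⟨h1, h2, hpu⟩
    have hdisj : Disjoint ((S.filter p).erase m) ((S.filter fun u => ¬ p u).erase m) := by
      rw [Finset.disjoint_left]
      intro a ha hb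
      exact (Finset.mem_filter.1 (Finset.mem_of_mem_erase hb)).2
        (Finset.mem_filter.1 (Finset.mem_of_mem_erase ha)).2
    have hcard : ((S.filter p).erase m).card + ((S.filter fun u => ¬ p u).erase m).card
        = d - 1 := by
      rw [← Finset.card_union_of_disjoint hdisj, hunion,
        Finset.card_erase_of_mem hmS, hunif S hSE]
    have hd1n : 1 ≤ d := le_trans (by norm_num) hd
    have hcard' : ((S.filter p).erase m).card + ((S.filter fun u => ¬ p u).erase m).card + 1
        = d := by omega
    have hcast : (((S.filter p).erase m).card : ℝ)
        + (((S.filter fun u => ¬ p u).erase m).card : ℝ) + 1 = (d:ℝ) := by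
      exact_mod_cast congrArg (Nat.cast (R := ℝ)) hcard'
    rw [Finset.sum_sub_distrib, Finset.sum_const, nsmul_eq_mul, mul_one]
    linarith
  -- nonnegativity of gap terms
  have hgap : ∀ S : Finset V, ∀ u ∈ (S.filter p).erase m, 0 ≤ 1 - c u / D u := by
    intro S u hu
    have hpu : p u := (Finset.mem_filter.1 (Finset.mem_of_mem_erase hu)).2
    have hDpos : 0 < D u := lt_of_le_of_lt (hc u) hpu.2
    have : c u / D u ≤ 1 := by
      rw [div_le_one hDpos]; exact le_of_lt hpu.2
    linarith
  have hterm : ∀ S ∈ (E.filter (fun S => m ∈ S)).erase S₁,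
      (r m S / ((d:ℝ)-1)) *
        ((((S.filter fun u => ¬ p u).erase m).card : ℝ)
          + ∑ u ∈ (S.filter p).erase m, c u / D u) ≤ r m S := by
    intro S hS
    have hSE := Finset.mem_filter.1 (Finset.mem_of_mem_erase hS)
    have h1 := hbr S hSE.1 hSE.2
    have h2 : 0 ≤ ∑ u ∈ (S.filter p).erase m, (1 - c u / D u) :=
      Finset.sum_nonneg (hgap S)
    have h3 : 0 ≤ r m S / ((d:ℝ)-1) := div_nonneg (hval.1 m S) (le_of_lt hdpos)
    have hb : (((S.filter fun u => ¬ p u).erase m).card : ℝ)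
        + ∑ u ∈ (S.filter p).erase m, c u / D u ≤ ((d:ℝ)-1) := by linarith
    have h4 := mul_le_mul_of_nonneg_left hb h3
    rwa [div_mul_cancel₀ _ (ne_of_gt hdpos)] at h4
  have hterm₁ :
      (r m S₁ / ((d:ℝ)-1)) *
        ((((S₁.filter fun u => ¬ p u).erase m).card : ℝ)
          + ∑ u ∈ (S₁.filter p).erase m, c u / D u)
      ≤ r m S₁ - (r m S₁ / ((d:ℝ)-1)) * (1 - c u₁ / D u₁) := by
    have h1 := hbr S₁ hS₁ hmS₁
    have hu₁mem : u₁ ∈ (S₁.filter p).erase m :=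
      Finset.mem_erase.2 ⟨hu₁m, Finset.mem_filter.2 ⟨hu₁S, ⟨hu₁M, hu₁p⟩⟩⟩
    have h2 : (1 - c u₁ / D u₁) ≤ ∑ u ∈ (S₁.filter p).erase m, (1 - c u / D u) :=
      Finset.single_le_sum (hgap S₁) hu₁mem
    have h3 : 0 ≤ r m S₁ / ((d:ℝ)-1) := div_nonneg (hval.1 m S₁) (le_of_lt hdpos)
    have hb : (((S₁.filter fun u => ¬ p u).erase m).card : ℝ)
        + ∑ u ∈ (S₁.filter p).erase m, c u / D u
        ≤ ((d:ℝ)-1) - (1 - c u₁ / D u₁) := by linarith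
    have h4 := mul_le_mul_of_nonneg_left hb h3
    have h5 : (r m S₁ / ((d:ℝ)-1)) * (((d:ℝ)-1) - (1 - c u₁ / D u₁))
        = r m S₁ - (r m S₁ / ((d:ℝ)-1)) * (1 - c u₁ / D u₁) := by
      field_simp
    rwa [h5] at h4
  have hS₁mem : S₁ ∈ E.filter (fun S => m ∈ S) := Finset.mem_filter.2 ⟨hS₁, hmS₁⟩
  have hsplit := Finset.sum_erase_add (E.filter (fun S => m ∈ S))
    (fun S => (r m S / ((d:ℝ)-1)) *
        ((((S.filter fun u => ¬ p u).erase m).card : ℝ)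
          + ∑ u ∈ (S.filter p).erase m, c u / D u)) hS₁mem
  have hrsplit := Finset.sum_erase_add (E.filter (fun S => m ∈ S)) (fun S => r m S) hS₁mem
  have hrsum : ∑ S ∈ E.filter (fun S => m ∈ S), r m S = c m := hval.2.2 m hm
  have hsum1 : ∑ S ∈ (E.filter (fun S => m ∈ S)).erase S₁,
      (r m S / ((d:ℝ)-1)) *
        ((((S.filter fun u => ¬ p u).erase m).card : ℝ)
          + ∑ u ∈ (S.filter p).erase m, c u / D u)
      ≤ ∑ S ∈ (E.filter (fun S => m ∈ S)).erase S₁, r m S :=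
    Finset.sum_le_sum hterm
  have hfp : fplus d E c M r m = ∑ S ∈ E.filter (fun S => m ∈ S),
      (r m S / ((d:ℝ)-1)) *
        ((((S.filter fun u => ¬ p u).erase m).card : ℝ)
          + ∑ u ∈ (S.filter p).erase m, c u / D u) := rfl
  rw [hfp, ← hsplit]
  have hr2 := hrsplit.trans hrsum
  linarith
lemma fplus_ge (d : ℕ) (hd : 2 ≤ d) (E : Finset (Finset V))
    (hunif : ∀ S ∈ E, S.card = d) (c : V → ℝ) (hc : ∀ v, 0 ≤ c v)
    (T : ℝ) (M : Finset V) (r : V → Finset V → ℝ)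
    (hnash : IsNashEq d E c T M r) (m : V) (hm : m ∈ M)
    (hdm : demand d E M r m ≤ c m) :
    c m ≤ fplus d E c M r m := by
  have hval := hnash.1
  have hd1 : (1:ℝ) ≤ (d:ℝ) - 1 := by
    have : (2:ℝ) ≤ (d:ℝ) := by exact_mod_cast hd
    linarith
  have hdpos : (0:ℝ) < (d:ℝ) - 1 := by linarith
  by_cases hpiv : ∃ S₀ ∈ E, m ∈ S₀ ∧ M ∩ S₀ = {m}
  · -- pivotal: move all ransom to the pivot club
    obtain ⟨S₀, hS₀E, hmS₀, hpivS₀⟩ := hpiv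
    set r' : V → Finset V → ℝ :=
      fun w S => if w = m then (if S = S₀ then c m else 0) else r w S with hr'
    have hrm : ∀ w S, w ≠ m → r' w S = r w S := by
      intro w S hw; simp only [hr', if_neg hw]
    have hval' : ValidProfile E c M r' := by
      refine ⟨?_, ?_, ?_⟩
      · intro w S
        simp only [hr']
        split_ifs
        · exact hc m
        · exact le_rfl
        · exact hval.1 w S
      · intro w S hcond
        by_cases hw : w = m
        · have hSne : S ≠ S₀ := by
            rintro rfl
            rcases hcond with h | h | h
            · exact h (hw ▸ hm)
            · exact h (hw ▸ hmS₀)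
            · exact h hS₀E
          simp only [hr', if_pos hw, if_neg hSne]
        · rw [hrm w S hw]; exact hval.2.1 w S hcond
      · intro w hw
        by_cases hwm : w = m
        · have hall : ∀ S ∈ E.filter (fun S => w ∈ S), r' w S = if S = S₀ then c m else 0 := by
            intro S hS; simp only [hr', if_pos hwm]
          rw [Finset.sum_congr rfl hall, Finset.sum_ite_eq' (E.filter (fun S => w ∈ S)) S₀]
          rw [if_pos (Finset.mem_filter.2 ⟨hS₀E, by rw [hwm]; exact hmS₀⟩)]
          exact (congrArg c hwm).symm
        · rw [Finset.sum_congr rfl (fun S _ => hrm w S hwm)]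
          exact hval.2.2 w hw
    have hdev : Deviation m M M r r' := ⟨fun u _ => Iff.rfl, fun u S hu => hrm u S hu⟩
    have hnle := hnash.2 m M r' hval' hdev
    have hdm' : demand d E M r' m = demand d E M r m :=
      demand_eq_of_deviation d E m (fun u _ => Iff.rfl) hrm
    -- compute the deviation utility
    rw [utility_mem d E c T M r' m hm, utility_mem d E c T M r m hm, hdm'] at hnle
    have hfp' : fplus d E c M r' m = c m := by
      have hterm0 : ∀ S ∈ E.filter (fun S => m ∈ S), S ≠ S₀ →
          (r' m S / ((d:ℝ)-1)) *
            ((((S.filter fun u => ¬(u ∈ M ∧ c u < demand d E M r' u)).erase m).card : ℝ) +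
              ∑ u ∈ (S.filter fun u => u ∈ M ∧ c u < demand d E M r' u).erase m,
                c u / demand d E M r' u) = 0 := by
        intro S hS hSne
        have : r' m S = 0 := by simp only [hr', if_pos rfl, if_neg hSne]
        rw [this, zero_div, zero_mul]
      have hS₀f : S₀ ∈ E.filter (fun S => m ∈ S) := Finset.mem_filter.2 ⟨hS₀E, hmS₀⟩
      unfold fplus
      rw [Finset.sum_eq_single_of_mem S₀ hS₀f hterm0]
      have hset1 : (S₀.filter fun u => ¬(u ∈ M ∧ c u < demand d E M r' u)).erase m
          = S₀.erase m := by
        ext u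
        simp only [mem_erase, mem_filter]
        constructor
        · rintro ⟨h1, h2, _⟩; exact ⟨h1, h2⟩
        · rintro ⟨h1, h2⟩
          refine ⟨h1, h2, ?_⟩
          rintro ⟨huM, -⟩
          have : u ∈ M ∩ S₀ := Finset.mem_inter.2 ⟨huM, h2⟩
          rw [hpivS₀, Finset.mem_singleton] at this
          exact h1 this
      have hset2 : (S₀.filter fun u => u ∈ M ∧ c u < demand d E M r' u).erase m = ∅ := by
        rw [Finset.eq_empty_iff_forall_notMem]
        intro u hu
        have h1 := Finset.mem_erase.1 hu
        have h2 := Finset.mem_filter.1 h1.2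
        have : u ∈ M ∩ S₀ := Finset.mem_inter.2 ⟨h2.2.1, h2.1⟩
        rw [hpivS₀, Finset.mem_singleton] at this
        exact h1.1 this
      rw [hset1, hset2]
      have hrmS₀ : r' m S₀ = c m := by simp [hr']
      rw [hrmS₀, Finset.sum_empty, add_zero, Finset.card_erase_of_mem hmS₀, hunif S₀ hS₀E]
      have hdn : 1 ≤ d := le_trans (by norm_num) hd
      have : ((d - 1 : ℕ) : ℝ) = (d:ℝ) - 1 := by
        push_cast [Nat.cast_sub hdn]
        ring
      rw [this]
      field_simp
    rw [hfp'] at hnle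
    linarith
  · -- non-pivotal: leave the mafia
    push_neg at hpiv
    set r' : V → Finset V → ℝ := fun w S => if w = m then 0 else r w S with hr'
    have hrm : ∀ w S, w ≠ m → r' w S = r w S := by
      intro w S hw; simp only [hr', if_neg hw]
    set M' := M.erase m with hM'
    have hmem : ∀ u, u ≠ m → (u ∈ M' ↔ u ∈ M) := by
      intro u hu
      simp [hM', Finset.mem_erase, hu]
    have hval' : ValidProfile E c M' r' := by
      refine ⟨?_, ?_, ?_⟩
      · intro w S
        by_cases hw : w = m
        · subst hw; simp [hr']
        · rw [hrm w S hw]; exact hval.1 w S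
      · intro w S hcond
        by_cases hw : w = m
        · subst hw; simp [hr']
        · rw [hrm w S hw]
          refine hval.2.1 w S ?_
          rcases hcond with h | h | h
          · exact Or.inl (fun hwM => h ((hmem w hw).2 hwM))
          · exact Or.inr (Or.inl h)
          · exact Or.inr (Or.inr h)
      · intro w hw
        have hwm : w ≠ m := by
          rintro rfl; exact (Finset.notMem_erase w M) (hM' ▸ hw)
        rw [Finset.sum_congr rfl (fun S _ => hrm w S hwm)]
        exact hval.2.2 w ((hmem w hwm).1 hw)
    have hdev : Deviation m M M' r r' := ⟨hmem, fun u S hu => hrm u S hu⟩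
    have hnle := hnash.2 m M' r' hval' hdev
    have hmM' : m ∉ M' := Finset.notMem_erase m M
    have hdm' : demand d E M' r' m = demand d E M r m :=
      demand_eq_of_deviation d E m hmem hrm
    rw [utility_not_mem d E c T M' r' m hmM', utility_mem d E c T M r m hm, hdm'] at hnle
    have hpen : ¬ ∃ S ∈ E, m ∈ S ∧ M' ∩ S = ∅ := by
      rintro ⟨S, hSE, hmS, hempty⟩
      have hne := hpiv S hSE hmS
      have hsub : {m} ⊆ M ∩ S := by
        intro x hx
        rw [Finset.mem_singleton] at hx
        subst hx
        exact Finset.mem_inter.2 ⟨hm, hmS⟩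
      obtain ⟨u, huMS, hum⟩ := Finset.exists_of_ssubset (hsub.ssubset_of_ne (Ne.symm hne))
      rw [Finset.mem_singleton] at hum
      have : u ∈ M' ∩ S := by
        rw [Finset.mem_inter] at huMS ⊢
        exact ⟨Finset.mem_erase.2 ⟨hum, huMS.1⟩, huMS.2⟩
      rw [hempty] at this
      exact absurd this (Finset.notMem_empty u)
    rw [if_neg hpen] at hnle
    have hmin : min (demand d E M r m) (c m) = demand d E M r m := min_eq_left hdm
    rw [hmin] at hnle
    linarith
lemma key_zero (d : ℕ) (hd : 2 ≤ d) (E : Finset (Finset V))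
    (hunif : ∀ S ∈ E, S.card = d) (c : V → ℝ) (hc : ∀ v, 0 ≤ c v)
    (T : ℝ) (M : Finset V) (r : V → Finset V → ℝ)
    (hnash : IsNashEq d E c T M r) (m : V) (hm : m ∈ M)
    (hdm : demand d E M r m ≤ c m)
    {S₁ : Finset V} (hS₁ : S₁ ∈ E) (hmS₁ : m ∈ S₁)
    {u₁ : V} (hu₁M : u₁ ∈ M) (hu₁S : u₁ ∈ S₁) (hu₁m : u₁ ≠ m)
    (hu₁p : c u₁ < demand d E M r u₁) :
    r m S₁ = 0 := by
  have hd1 : (1:ℝ) ≤ (d:ℝ) - 1 := by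
    have : (2:ℝ) ≤ (d:ℝ) := by exact_mod_cast hd
    linarith
  have hdpos : (0:ℝ) < (d:ℝ) - 1 := by linarith
  have hge := fplus_ge d hd E hunif c hc T M r hnash m hm hdm
  have hle := fplus_le_of d hd E hunif c hc M r hnash.1 m hm hS₁ hmS₁ hu₁M hu₁S hu₁m hu₁p
  have hDpos : 0 < demand d E M r u₁ := lt_of_le_of_lt (hc u₁) hu₁p
  have hgap : 0 < 1 - c u₁ / demand d E M r u₁ := by
    have : c u₁ / demand d E M r u₁ < 1 := (div_lt_one hDpos).2 hu₁p
    linarith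
  have h0 : (r m S₁ / ((d:ℝ)-1)) * (1 - c u₁ / demand d E M r u₁) ≤ 0 := by linarith
  have hr0 : 0 ≤ r m S₁ := hnash.1.1 m S₁
  rcases eq_or_lt_of_le hr0 with h | h
  · exact h.symm
  · exfalso
    have : 0 < (r m S₁ / ((d:ℝ)-1)) * (1 - c u₁ / demand d E M r u₁) :=
      mul_pos (div_pos h hdpos) hgap
    linarith
lemma protected_empty (d : ℕ) (hd : 2 ≤ d) (E : Finset (Finset V))
    (hunif : ∀ S ∈ E, S.card = d) (c : V → ℝ) (hc : ∀ v, 0 ≤ c v)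
    (T : ℝ) (M : Finset V) (r : V → Finset V → ℝ)
    (hnash : IsNashEq d E c T M r) :
    ∀ u ∈ M, demand d E M r u ≤ c u := by
  have hval := hnash.1
  have hd1 : (1:ℝ) ≤ (d:ℝ) - 1 := by
    have : (2:ℝ) ≤ (d:ℝ) := by exact_mod_cast hd
    linarith
  have hdpos : (0:ℝ) < (d:ℝ) - 1 := by linarith
  by_contra hcon
  push_neg at hcon
  obtain ⟨u₀, hu₀M, hu₀⟩ := hcon
  set D := demand d E M r with hD
  set P := M.filter (fun u => c u < D u) with hP
  have hPne : P.Nonempty := ⟨u₀, Finset.mem_filter.2 ⟨hu₀M, hu₀⟩⟩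
  have hPsub : P ⊆ M := Finset.filter_subset _ _
  -- (d-1) * D u as a double sum
  have hDu : ∀ u : V, ((d:ℝ)-1) * D u
      = ∑ S ∈ E.filter (fun S => u ∈ S), ∑ m ∈ (M ∩ S).erase u, r m S := by
    intro u
    rw [hD]
    unfold demand
    rw [← mul_assoc, mul_one_div, div_self (ne_of_gt hdpos), one_mul]
  -- key: unprotected members don't extort clubs containing protected members
  have hkey : ∀ S ∈ E, ∀ u ∈ P, u ∈ S → ∀ m ∈ (M ∩ S).erase u, m ∉ P → r m S = 0 := by
    intro S hSE u huP huS m hmMS hmP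
    have hmM : m ∈ M := (Finset.mem_inter.1 (Finset.mem_of_mem_erase hmMS)).1
    have hmS : m ∈ S := (Finset.mem_inter.1 (Finset.mem_of_mem_erase hmMS)).2
    have hmu : m ≠ u := Finset.ne_of_mem_erase hmMS
    have hdm : D m ≤ c m := by
      by_contra h
      exact hmP (Finset.mem_filter.2 ⟨hmM, not_le.1 h⟩)
    have huPp := (Finset.mem_filter.1 huP).2
    exact key_zero d hd E hunif c hc T M r hnash m hmM hdm hSE hmS
      ((Finset.mem_filter.1 huP).1) huS (Ne.symm hmu) huPp
  -- chain of inequalities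
  have step1 : ∑ u ∈ P, (((d:ℝ)-1) * D u)
      = ∑ S ∈ E, ∑ u ∈ P.filter (fun u => u ∈ S), ∑ m ∈ (M ∩ S).erase u, r m S := by
    rw [Finset.sum_congr rfl (fun u _ => hDu u)]
    have h1 : ∀ u : V, ∑ S ∈ E.filter (fun S => u ∈ S), (∑ m ∈ (M ∩ S).erase u, r m S)
        = ∑ S ∈ E, if u ∈ S then ∑ m ∈ (M ∩ S).erase u, r m S else 0 :=
      fun u => Finset.sum_filter _ _
    rw [Finset.sum_congr rfl (fun u _ => h1 u), Finset.sum_comm]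
    exact Finset.sum_congr rfl (fun S _ => (Finset.sum_filter _ _).symm)
  have hcast : ((d - 1 : ℕ) : ℝ) = (d:ℝ) - 1 := by
    have hdn : 1 ≤ d := le_trans (by norm_num) hd
    push_cast [Nat.cast_sub hdn]
    ring
  have step2 : ∀ S ∈ E, ∑ u ∈ P.filter (fun u => u ∈ S), ∑ m ∈ (M ∩ S).erase u, r m S
      ≤ ∑ m ∈ P.filter (fun m => m ∈ S), (((d:ℝ)-1) * r m S) := by
    intro S hSE
    have hinner : ∀ u ∈ P.filter (fun u => u ∈ S),
        ∑ m ∈ (M ∩ S).erase u, r m S = ∑ m ∈ (P ∩ S).erase u, r m S := by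
      intro u huPS
      have huP := (Finset.mem_filter.1 huPS).1
      have huS := (Finset.mem_filter.1 huPS).2
      have h2 : ∑ m ∈ ((M ∩ S).erase u).filter (fun m => m ∈ P), r m S
          = ∑ m ∈ (M ∩ S).erase u, r m S := by
        apply Finset.sum_filter_of_ne
        intro m hmMS hrne
        by_contra hmP
        exact hrne (hkey S hSE u huP huS m hmMS hmP)
      have h3 : ((M ∩ S).erase u).filter (fun m => m ∈ P) = (P ∩ S).erase u := by
        ext m
        simp only [Finset.mem_filter, Finset.mem_erase, Finset.mem_inter]
        constructor
        · rintro ⟨⟨hmu, hmM, hmS⟩, hmP⟩; exact ⟨hmu, hmP, hmS⟩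
        · rintro ⟨hmu, hmP, hmS⟩; exact ⟨⟨hmu, hPsub hmP, hmS⟩, hmP⟩
      rw [← h2, h3]
    rw [Finset.sum_congr rfl hinner]
    have hPS : P.filter (fun u => u ∈ S) = P ∩ S := Finset.filter_mem_eq_inter
    rw [hPS]
    have hswap : ∑ u ∈ P ∩ S, ∑ m ∈ (P ∩ S).erase u, r m S
        = ∑ m ∈ P ∩ S, (((P ∩ S).erase m).card : ℝ) * r m S := by
      have e1 : ∀ u : V, ∑ m ∈ (P ∩ S).erase u, r m S
          = ∑ m ∈ P ∩ S, if m ≠ u then r m S else 0 := by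
        intro u
        rw [← Finset.sum_filter, Finset.filter_ne']
      rw [Finset.sum_congr rfl (fun u _ => e1 u), Finset.sum_comm]
      refine Finset.sum_congr rfl (fun m hm => ?_)
      rw [← Finset.sum_filter]
      have hfe : (P ∩ S).filter (fun u => m ≠ u) = (P ∩ S).erase m := by
        ext u
        simp only [Finset.mem_filter, Finset.mem_erase]
        constructor
        · rintro ⟨h1, h2⟩; exact ⟨Ne.symm h2, h1⟩
        · rintro ⟨h1, h2⟩; exact ⟨h2, Ne.symm h1⟩
      rw [hfe, Finset.sum_const, nsmul_eq_mul]
    rw [hswap]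
    refine Finset.sum_le_sum (fun m hmPS => ?_)
    have hmS : m ∈ S := (Finset.mem_inter.1 hmPS).2
    have hcle : ((P ∩ S).erase m).card ≤ d - 1 := by
      have hsub2 : (P ∩ S).erase m ⊆ S.erase m := by
        intro x hx
        exact Finset.mem_erase.2 ⟨Finset.ne_of_mem_erase hx,
          (Finset.mem_inter.1 (Finset.mem_of_mem_erase hx)).2⟩
      calc ((P ∩ S).erase m).card ≤ (S.erase m).card := Finset.card_le_card hsub2
        _ = d - 1 := by rw [Finset.card_erase_of_mem hmS, hunif S hSE]
    have hcle' : (((P ∩ S).erase m).card : ℝ) ≤ (d:ℝ) - 1 := by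
      rw [← hcast]
      exact_mod_cast hcle
    exact mul_le_mul_of_nonneg_right hcle' (hval.1 m S)
  have step3 : ∑ S ∈ E, ∑ m ∈ P.filter (fun m => m ∈ S), (((d:ℝ)-1) * r m S)
      = ((d:ℝ)-1) * ∑ m ∈ P, c m := by
    have h1 : ∀ S ∈ E, ∑ m ∈ P.filter (fun m => m ∈ S), (((d:ℝ)-1) * r m S)
        = ∑ m ∈ P, if m ∈ S then ((d:ℝ)-1) * r m S else 0 :=
      fun S _ => Finset.sum_filter _ _
    rw [Finset.sum_congr rfl h1, Finset.sum_comm]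
    rw [Finset.mul_sum]
    refine Finset.sum_congr rfl (fun m hmP => ?_)
    rw [← Finset.sum_filter, ← Finset.mul_sum, hval.2.2 m (hPsub hmP)]
  have hle1 : ((d:ℝ)-1) * ∑ u ∈ P, D u ≤ ((d:ℝ)-1) * ∑ m ∈ P, c m := by
    rw [Finset.mul_sum, step1, ← step3]
    exact Finset.sum_le_sum step2
  have hle2 : ∑ u ∈ P, D u ≤ ∑ m ∈ P, c m :=
    le_of_mul_le_mul_left hle1 hdpos
  have hlt : ∑ m ∈ P, c m < ∑ u ∈ P, D u :=
    Finset.sum_lt_sum_of_nonempty hPne (fun u hu => (Finset.mem_filter.1 hu).2)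
  linarith
set_option maxHeartbeats 1000000 in
/-- in any pure Nash equilibrium `(M, r)` of the Mafia Hitting Set Game, every
civilian `v` satisfies `D v ≤ (d/(d-1))·c v`. -/
theorem stmt_14 (d : ℕ) (hd : 2 ≤ d) (E : Finset (Finset V))
    (hunif : ∀ S ∈ E, S.card = d)
    (c : V → ℝ) (hc : ∀ v, 0 ≤ c v) (T : ℝ) (hT : 2 * ∑ v, c v < T)
    (M : Finset V) (r : V → Finset V → ℝ)
    (hnash : IsNashEq d E c T M r)
    (v : V) (hv : v ∉ M) :
    demand d E M r v ≤ ((d : ℝ) / ((d : ℝ) - 1)) * c v := by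
  have hval := hnash.1
  have hd2 : (2:ℝ) ≤ (d:ℝ) := by exact_mod_cast hd
  have hd1 : (1:ℝ) ≤ (d:ℝ) - 1 := by linarith
  have hdpos : (0:ℝ) < (d:ℝ) - 1 := by linarith
  have hdne : ((d:ℝ) - 1) ≠ 0 := ne_of_gt hdpos
  have hdR : (0:ℝ) < (d:ℝ) := by linarith
  by_contra hcon
  push_neg at hcon
  set Dv := demand d E M r v with hDveq
  have hcv : 0 ≤ c v := hc v
  have hfrac : (1:ℝ) ≤ (d:ℝ)/((d:ℝ)-1) := by
    rw [le_div_iff₀ hdpos]; linarith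
  have hDvpos : 0 < Dv := by
    have h0 : (0:ℝ) ≤ ((d:ℝ)/((d:ℝ)-1)) * c v :=
      mul_nonneg (le_trans zero_le_one hfrac) hcv
    linarith
  have hcvDv : c v ≤ Dv := by
    have := le_mul_of_one_le_left hcv hfrac
    linarith
  have hkey2 : (d:ℝ) * c v ≤ ((d:ℝ)-1) * Dv := by
    have hmul := mul_lt_mul_of_pos_right hcon hdpos
    have hid : ((d:ℝ)/((d:ℝ)-1)) * c v * ((d:ℝ)-1) = (d:ℝ) * c v := by
      field_simp
    nlinarith
  -- the deviation ransom
  set ρ : Finset V → ℝ := fun S => ∑ m ∈ (M ∩ S).erase v, r m S with hρ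
  have hρnn : ∀ S, 0 ≤ ρ S := fun S => Finset.sum_nonneg (fun m _ => hval.1 m S)
  set K : ℝ := ((d:ℝ)-1) * Dv with hK
  have hKpos : 0 < K := mul_pos hdpos hDvpos
  set r' : V → Finset V → ℝ :=
    fun w S => if w = v then (if v ∈ S ∧ S ∈ E then c v * ρ S / K else 0) else r w S
    with hr'
  have hrv : ∀ w S, w ≠ v → r' w S = r w S := by
    intro w S hw; simp only [hr', if_neg hw]
  have hv0 : ∀ S, v ∉ S → r' v S = 0 := by
    intro S hS
    simp only [hr', if_pos rfl]
    rw [if_neg (by tauto)]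
  have hr'nn : ∀ w S, 0 ≤ r' w S := by
    intro w S
    simp only [hr']
    split_ifs
    · exact div_nonneg (mul_nonneg hcv (hρnn S)) (le_of_lt hKpos)
    · exact le_rfl
    · exact hval.1 w S
  have hρsum : ∑ S ∈ E.filter (fun S => v ∈ S), ρ S = ((d:ℝ)-1) * Dv := by
    rw [hDveq, demand_mul d E M r v hdne]
  have hsum' : ∑ S ∈ E.filter (fun S => v ∈ S), r' v S = c v := by
    have h1 : ∀ S ∈ E.filter (fun S => v ∈ S), r' v S = (c v / K) * ρ S := by
      intro S hS
      have hSf := Finset.mem_filter.1 hS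
      simp only [hr', if_pos rfl]
      rw [if_pos ⟨hSf.2, hSf.1⟩]
      ring
    rw [Finset.sum_congr rfl h1, ← Finset.mul_sum, hρsum, ← hK]
    exact div_mul_cancel₀ (c v) (ne_of_gt hKpos)
  set M' := insert v M with hM'
  have hvM' : v ∈ M' := Finset.mem_insert_self v M
  have hmem : ∀ u, u ≠ v → (u ∈ M' ↔ u ∈ M) := by
    intro u hu
    simp [hM', Finset.mem_insert, hu]
  have hval' : ValidProfile E c M' r' := by
    refine ⟨hr'nn, ?_, ?_⟩
    · intro w S hcond
      by_cases hw : w = v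
      · simp only [hr', if_pos hw]
        rw [if_neg]
        rintro ⟨h1, h2⟩
        rcases hcond with h | h | h
        · exact h (hw ▸ hvM')
        · exact h (hw ▸ h1)
        · exact h h2
      · rw [hrv w S hw]
        refine hval.2.1 w S ?_
        rcases hcond with h | h | h
        · exact Or.inl (fun hwM => h ((hmem w hw).2 hwM))
        · exact Or.inr (Or.inl h)
        · exact Or.inr (Or.inr h)
    · intro w hw
      by_cases hwv : w = v
      · rw [hwv]
        exact hsum'
      · rw [Finset.sum_congr rfl (fun S _ => hrv w S hwv)]
        exact hval.2.2 w ((hmem w hwv).1 hw)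
  have hdev : Deviation v M M' r r' := ⟨hmem, fun u S hu => hrv u S hu⟩
  have hnle := hnash.2 v M' r' hval' hdev
  have hD'v : demand d E M' r' v = Dv := demand_eq_of_deviation d E v hmem hrv
  rw [utility_mem d E c T M' r' v hvM', utility_not_mem d E c T M r v hv, hD'v,
    min_eq_right hcvDv] at hnle
  -- the penalty is nonnegative
  have hTpos : (0:ℝ) ≤ T := by
    have h0 : (0:ℝ) ≤ 2 * ∑ w, c w := by
      have := Finset.sum_nonneg (fun w (_ : w ∈ (Finset.univ : Finset V)) => hc w)
      linarith
    linarith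
  have hpen : (0:ℝ) ≤ (if ∃ S ∈ E, v ∈ S ∧ M ∩ S = ∅ then T else 0) := by
    split_ifs
    · exact hTpos
    · exact le_rfl
  -- per-member bound in clubs containing v
  have hP0 := protected_empty d hd E hunif c hc T M r hnash
  have hperu : ∀ u, u ≠ v → u ∈ M → c u < demand d E M' r' u →
      ((d:ℝ)-1)/(d:ℝ) ≤ c u / demand d E M' r' u := by
    intro u huv huM hprot
    have hDu' := demand_insert_eq d E hv huv hrv hv0 (r := r)
    rw [← hM'] at hDu'
    -- bound the extra ransom
    have hAle : (∑ S ∈ E.filter (fun S => u ∈ S), r' v S) ≤ c u := by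
      have hA2' : ∑ S ∈ (E.filter (fun S => u ∈ S)).filter (fun S => v ∈ S), r' v S
          = ∑ S ∈ E.filter (fun S => u ∈ S), r' v S := by
        apply Finset.sum_filter_of_ne
        intro S hS hne
        by_contra hvS
        exact hne (hv0 S hvS)
      have hA2 : ∑ S ∈ (E.filter (fun S => u ∈ S)).filter (fun S => v ∈ S), r' v S
          = ∑ S ∈ (E.filter (fun S => u ∈ S)).filter (fun S => v ∈ S), (c v / K) * ρ S := by
        refine Finset.sum_congr rfl (fun S hS => ?_)
        have hSf := Finset.mem_filter.1 (Finset.mem_filter.1 hS).1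
        have hvS := (Finset.mem_filter.1 hS).2
        simp only [hr', if_pos rfl]
        rw [if_pos ⟨hvS, hSf.1⟩]
        ring
      have hρle : ∀ S ∈ (E.filter (fun S => u ∈ S)).filter (fun S => v ∈ S),
          ρ S = r u S + ∑ m ∈ (M ∩ S).erase u, r m S := by
        intro S hS
        have huS := (Finset.mem_filter.1 (Finset.mem_filter.1 hS).1).2
        have hvMS : v ∉ M ∩ S := fun h => hv (Finset.mem_inter.1 h).1
        have huMS : u ∈ M ∩ S := Finset.mem_inter.2 ⟨huM, huS⟩
        show (∑ m ∈ (M ∩ S).erase v, r m S) = _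
        rw [Finset.erase_eq_of_notMem hvMS, ← Finset.add_sum_erase _ _ huMS]
      have hsub : (E.filter (fun S => u ∈ S)).filter (fun S => v ∈ S)
          ⊆ E.filter (fun S => u ∈ S) := Finset.filter_subset _ _
      have hρtot : ∑ S ∈ (E.filter (fun S => u ∈ S)).filter (fun S => v ∈ S), ρ S
          ≤ (d:ℝ) * c u := by
        rw [Finset.sum_congr rfl hρle, Finset.sum_add_distrib]
        have t1 : ∑ S ∈ (E.filter (fun S => u ∈ S)).filter (fun S => v ∈ S), r u S
            ≤ ∑ S ∈ E.filter (fun S => u ∈ S), r u S :=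
          Finset.sum_le_sum_of_subset_of_nonneg hsub (fun S _ _ => hval.1 u S)
        have t2 : ∑ S ∈ (E.filter (fun S => u ∈ S)).filter (fun S => v ∈ S),
              ∑ m ∈ (M ∩ S).erase u, r m S
            ≤ ∑ S ∈ E.filter (fun S => u ∈ S), ∑ m ∈ (M ∩ S).erase u, r m S :=
          Finset.sum_le_sum_of_subset_of_nonneg hsub
            (fun S _ _ => Finset.sum_nonneg (fun m _ => hval.1 m S))
        have t3 : ∑ S ∈ E.filter (fun S => u ∈ S), r u S = c u := hval.2.2 u huM
        have t4 : ∑ S ∈ E.filter (fun S => u ∈ S), ∑ m ∈ (M ∩ S).erase u, r m S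
            = ((d:ℝ)-1) * demand d E M r u := (demand_mul d E M r u hdne).symm
        have t5 : demand d E M r u ≤ c u := hP0 u huM
        have t6 : ((d:ℝ)-1) * demand d E M r u ≤ ((d:ℝ)-1) * c u :=
          mul_le_mul_of_nonneg_left t5 (le_of_lt hdpos)
        nlinarith
      rw [← hA2', hA2, ← Finset.mul_sum]
      have h7 : (c v / K) * (∑ S ∈ (E.filter (fun S => u ∈ S)).filter (fun S => v ∈ S), ρ S)
          ≤ (c v / K) * ((d:ℝ) * c u) :=
        mul_le_mul_of_nonneg_left hρtot (div_nonneg hcv (le_of_lt hKpos))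
      have h8 : (c v / K) * ((d:ℝ) * c u) ≤ c u := by
        rw [div_mul_eq_mul_div, div_le_iff₀ hKpos]
        have h9 := mul_le_mul_of_nonneg_right hkey2 (hc u)
        nlinarith
      linarith
    -- now bound the new demand
    have hDu'le : demand d E M' r' u ≤ (d:ℝ)/((d:ℝ)-1) * c u := by
      rw [hDu']
      have q1 : demand d E M r u ≤ c u := hP0 u huM
      have q2 : (1/((d:ℝ)-1)) * (∑ S ∈ E.filter (fun S => u ∈ S), r' v S)
          ≤ (1/((d:ℝ)-1)) * c u :=
        mul_le_mul_of_nonneg_left hAle (by positivity)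
      have q3 : c u + (1/((d:ℝ)-1)) * c u = (d:ℝ)/((d:ℝ)-1) * c u := by
        field_simp
        ring
      linarith
    have hcu : 0 < c u := by
      rcases lt_or_eq_of_le (hc u) with h | h
      · exact h
      · exfalso
        have : demand d E M' r' u ≤ 0 := by
          rw [← h] at hDu'le
          simpa using hDu'le
        rw [← h] at hprot
        linarith
    have hD'pos : 0 < demand d E M' r' u := lt_trans hcu hprot
    rw [div_le_div_iff₀ hdR hD'pos]
    have h10 := mul_le_mul_of_nonneg_left hDu'le (le_of_lt hdpos)
    have h11 : ((d:ℝ)-1) * ((d:ℝ)/((d:ℝ)-1) * c u) = (d:ℝ) * c u := by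
      field_simp
    linarith
  -- lower bound the new F⁺
  have hterm : ∀ S ∈ E.filter (fun S => v ∈ S),
      r' v S * (((d:ℝ)-1)/(d:ℝ))
        ≤ (r' v S / ((d:ℝ)-1)) *
          ((((S.filter fun u => ¬(u ∈ M' ∧ c u < demand d E M' r' u)).erase v).card : ℝ) +
            ∑ u ∈ (S.filter fun u => u ∈ M' ∧ c u < demand d E M' r' u).erase v,
              c u / demand d E M' r' u) := by
    intro S hS
    have hSE := (Finset.mem_filter.1 hS).1
    have hvS := (Finset.mem_filter.1 hS).2
    set p' : V → Prop := fun u => u ∈ M' ∧ c u < demand d E M' r' u with hp'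
    have hunion : ((S.filter p').erase v) ∪ ((S.filter (fun u => ¬ p' u)).erase v)
        = S.erase v := by
      ext u
      simp only [mem_union, mem_erase, mem_filter]
      constructor
      · rintro (⟨h1, h2, _⟩ | ⟨h1, h2, _⟩) <;> exact ⟨h1, h2⟩
      · rintro ⟨h1, h2⟩
        by_cases hpu : p' u
        · exact Or.inl ⟨h1, h2, hpu⟩
        · exact Or.inr ⟨h1, h2, hpu⟩
    have hdisj : Disjoint ((S.filter p').erase v) ((S.filter (fun u => ¬ p' u)).erase v) := by
      rw [Finset.disjoint_left]
      intro a ha hb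
      exact (Finset.mem_filter.1 (Finset.mem_of_mem_erase hb)).2
        (Finset.mem_filter.1 (Finset.mem_of_mem_erase ha)).2
    have hcard : ((S.filter p').erase v).card + ((S.filter (fun u => ¬ p' u)).erase v).card
        = d - 1 := by
      rw [← Finset.card_union_of_disjoint hdisj, hunion,
        Finset.card_erase_of_mem hvS, hunif S hSE]
    have hdn : 1 ≤ d := le_trans (by norm_num) hd
    have hcard1 : ((S.filter p').erase v).card + ((S.filter (fun u => ¬ p' u)).erase v).card + 1
        = d := by omega
    have hkcast : (((S.filter p').erase v).card : ℝ)
        + (((S.filter (fun u => ¬ p' u)).erase v).card : ℝ) = (d:ℝ) - 1 := by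
      have h0 := congrArg (Nat.cast (R := ℝ)) hcard1
      push_cast at h0
      linarith
    have hsumlb : (((S.filter p').erase v).card : ℝ) * (((d:ℝ)-1)/(d:ℝ))
        ≤ ∑ u ∈ (S.filter p').erase v, c u / demand d E M' r' u := by
      have hall : ∀ u ∈ (S.filter p').erase v,
          ((d:ℝ)-1)/(d:ℝ) ≤ c u / demand d E M' r' u := by
        intro u hu
        have huv := Finset.ne_of_mem_erase hu
        have hup' : p' u := (Finset.mem_filter.1 (Finset.mem_of_mem_erase hu)).2
        have huM : u ∈ M := by
          rcases Finset.mem_insert.1 hup'.1 with h | h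
          · exact absurd h huv
          · exact h
        exact hperu u huv huM hup'.2
      calc (((S.filter p').erase v).card : ℝ) * (((d:ℝ)-1)/(d:ℝ))
          = ∑ _u ∈ (S.filter p').erase v, (((d:ℝ)-1)/(d:ℝ)) := by
            rw [Finset.sum_const, nsmul_eq_mul]
        _ ≤ _ := Finset.sum_le_sum hall
    have hnn0 : (0:ℝ) ≤ (((S.filter (fun u => ¬ p' u)).erase v).card : ℝ) :=
      Nat.cast_nonneg _
    have hky : (((S.filter p').erase v).card : ℝ) ≤ (d:ℝ) - 1 := by linarith
    have he1 : ((d:ℝ)-1)/(d:ℝ) ≤ 1 := by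
      rw [div_le_one hdR]; linarith
    have hinner : ((d:ℝ)-1) * (((d:ℝ)-1)/(d:ℝ))
        ≤ ((((S.filter (fun u => ¬ p' u)).erase v).card : ℝ)
          + ∑ u ∈ (S.filter p').erase v, c u / demand d E M' r' u) := by
      nlinarith [mul_nonneg (sub_nonneg.2 hky) (sub_nonneg.2 he1)]
    have h3 : 0 ≤ r' v S / ((d:ℝ)-1) := div_nonneg (hr'nn v S) (le_of_lt hdpos)
    have h4 := mul_le_mul_of_nonneg_left hinner h3
    have h5 : (r' v S / ((d:ℝ)-1)) * (((d:ℝ)-1) * (((d:ℝ)-1)/(d:ℝ)))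
        = r' v S * (((d:ℝ)-1)/(d:ℝ)) := by
      rw [← mul_assoc, div_mul_cancel₀ _ hdne]
    rw [h5] at h4
    exact h4
  -- conclude
  have hfp : c v * (((d:ℝ)-1)/(d:ℝ)) ≤ fplus d E c M' r' v := by
    calc c v * (((d:ℝ)-1)/(d:ℝ))
        = ∑ S ∈ E.filter (fun S => v ∈ S), r' v S * (((d:ℝ)-1)/(d:ℝ)) := by
          rw [← Finset.sum_mul, hsum']
      _ ≤ fplus d E c M' r' v := Finset.sum_le_sum hterm
  have hDle : Dv ≤ 2 * c v - c v * (((d:ℝ)-1)/(d:ℝ)) := by linarith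
  have hxy : 2 ≤ ((d:ℝ)-1)/(d:ℝ) + (d:ℝ)/((d:ℝ)-1) := by
    rw [div_add_div _ _ (ne_of_gt hdR) hdne, le_div_iff₀ (mul_pos hdR hdpos)]
    nlinarith
  nlinarith [hxy, hcv, hcon, hDle]
end
end MafiaHS
end

section
/- Let (V, 𝓔) be a finite hypergraph with every hyperedge nonempty of size at most d, let C : 2^V → ℝ be a monotone submodular set function with C(∅) = 0, and let (M, y) be a complementary pair. Then C(M) ≤ d·∑_{S∈𝓔} y(S), and consequently C(M) ≤ d·C(M') for every hitting set M'; that is, M is a d-approximate solution of the submodular hitting set problem. -/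
open Finset

lemma swap_sum {V : Type*} [DecidableEq V] (E : Finset (Finset V)) (y : Finset V → ℝ)
    (Z : Finset V) :
    ∑ u ∈ Z, (∑ S ∈ E.filter (fun S => u ∈ S), y S)
      = ∑ S ∈ E, ((Z ∩ S).card : ℝ) * y S := by
  have h : ∀ u ∈ Z, ∑ S ∈ E.filter (fun S => u ∈ S), y S
      = ∑ S ∈ E, if u ∈ S then y S else 0 := fun u _ => (Finset.sum_filter _ _)
  rw [Finset.sum_congr rfl h, Finset.sum_comm]
  refine Finset.sum_congr rfl fun S _ => ?_
  rw [← Finset.sum_filter]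
  have : Z.filter (fun u => u ∈ S) = Z ∩ S := by
    ext u; simp [Finset.mem_inter]
  rw [this, Finset.sum_const, nsmul_eq_mul]

/-- let `(V, 𝓔)` be a finite hypergraph whose hyperedges are nonempty of size
at most `d`, and let `C` be a monotone submodular set function with `C ∅ = 0`.  If `(M, y)`
is a complementary pair (a hitting set `M` and a feasible dual `y` with
`∑_{u∈Z} z u ≤ C Z` for all `Z`, where `z u = ∑_{S ∋ u} y S`, and `∑_{u∈M} z u = C M`),
then `C M ≤ d·∑_{S∈𝓔} y S`, and consequently `C M ≤ d·C M'` for every hitting set `M'`. -/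
theorem stmt_16 {V : Type*} [Fintype V] [DecidableEq V]
    (d : ℕ) (E : Finset (Finset V))
    (hE : ∀ S ∈ E, S.Nonempty ∧ S.card ≤ d)
    (C : Finset V → ℝ)
    (hmono : ∀ ⦃X Y : Finset V⦄, X ⊆ Y → C X ≤ C Y)
    (hsub : ∀ X Y : Finset V, C (X ∩ Y) + C (X ∪ Y) ≤ C X + C Y)
    (hempty : C ∅ = 0)
    (M : Finset V) (y : Finset V → ℝ)
    (hM : ∀ S ∈ E, (M ∩ S).Nonempty)
    (hy0 : ∀ S, 0 ≤ y S)
    (hyfeas : ∀ Z : Finset V, ∑ u ∈ Z, (∑ S ∈ E.filter (fun S => u ∈ S), y S) ≤ C Z)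
    (htight : ∑ u ∈ M, (∑ S ∈ E.filter (fun S => u ∈ S), y S) = C M) :
    (C M ≤ d * ∑ S ∈ E, y S) ∧
      ∀ M' : Finset V, (∀ S ∈ E, (M' ∩ S).Nonempty) → C M ≤ d * C M' := by
  have key : C M ≤ d * ∑ S ∈ E, y S := by
    rw [← htight, swap_sum, Finset.mul_sum]
    refine Finset.sum_le_sum fun S hS => ?_
    have hcard : ((M ∩ S).card : ℝ) ≤ d := by
      exact_mod_cast le_trans (Finset.card_le_card (Finset.inter_subset_right)) (hE S hS).2
    exact mul_le_mul_of_nonneg_right hcard (hy0 S)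
  refine ⟨key, fun M' hM' => ?_⟩
  refine key.trans (mul_le_mul_of_nonneg_left ?_ (by positivity))
  have h1 : ∑ S ∈ E, y S ≤ ∑ S ∈ E, ((M' ∩ S).card : ℝ) * y S := by
    refine Finset.sum_le_sum fun S hS => ?_
    have : (1 : ℝ) ≤ ((M' ∩ S).card : ℝ) := by
      exact_mod_cast Finset.card_pos.mpr (hM' S hS)
    nlinarith [hy0 S]
  exact h1.trans (by rw [← swap_sum]; exact hyfeas M')
end

section
/- Let (V, 𝓔) be a finite hypergraph with every hyperedge nonempty, and let C : 2^V → ℝ be a monotone submodular set function with C(∅) = 0. Then there exists a complementary pair (M, y); that is, there exist a hitting set M and a feasible dual solution y with ∑_{u∈M} z(u) = C(M), where z(u) = ∑_{S : u∈S} y(S). (This is the output of the Iwata–Nagano primal-dual algorithm.) -/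
open Finset

section Aux

variable {V : Type*} [Fintype V] [DecidableEq V]

private noncomputable def gfun (E : Finset (Finset V)) (y : Finset V → ℝ) (Z : Finset V) : ℝ :=
  ∑ u ∈ Z, (∑ S ∈ E.filter (fun S => u ∈ S), y S)

private lemma gfun_inter_union (E : Finset (Finset V)) (y : Finset V → ℝ) (A B : Finset V) :
    gfun E y (A ∩ B) + gfun E y (A ∪ B) = gfun E y A + gfun E y B := by
  rw [add_comm]; exact Finset.sum_union_inter

open scoped Classical in
private noncomputable def Mset (E : Finset (Finset V)) (C : Finset V → ℝ)
    (y : Finset V → ℝ) : Finset V :=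
  ((univ : Finset (Finset V)).filter (fun Z => gfun E y Z = C Z)).sup id

private lemma Mset_tight (E : Finset (Finset V)) (C : Finset V → ℝ) (y : Finset V → ℝ)
    (hsub : ∀ X Y : Finset V, C (X ∩ Y) + C (X ∪ Y) ≤ C X + C Y)
    (hempty : C ∅ = 0)
    (hfeas : ∀ Z, gfun E y Z ≤ C Z) :
    gfun E y (Mset E C y) = C (Mset E C y) := by
  classical
  unfold Mset
  apply Finset.sup_induction (p := fun Z => gfun E y Z = C Z)
  · show gfun E y ∅ = C ∅
    simp [gfun, hempty]
  · intro a ha b hb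
    have h1 := gfun_inter_union E y a b
    have h2 := hsub a b
    have h3 := hfeas (a ∩ b)
    have h4 := hfeas (a ∪ b)
    show gfun E y (a ∪ b) = C (a ∪ b)
    linarith
  · intro b hb
    exact (Finset.mem_filter.mp hb).2

private lemma tight_subset_Mset (E : Finset (Finset V)) (C : Finset V → ℝ) (y : Finset V → ℝ)
    {Z : Finset V} (h : gfun E y Z = C Z) : Z ⊆ Mset E C y := by
  classical
  have hm : Z ∈ (univ : Finset (Finset V)).filter (fun W => gfun E y W = C W) :=
    Finset.mem_filter.mpr ⟨Finset.mem_univ Z, h⟩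
  have := Finset.le_sup (f := (id : Finset V → Finset V)) hm
  simpa [Mset] using this

private lemma finish_case (E : Finset (Finset V)) (C : Finset V → ℝ) (y : Finset V → ℝ)
    (hsub : ∀ X Y : Finset V, C (X ∩ Y) + C (X ∪ Y) ≤ C X + C Y)
    (hempty : C ∅ = 0)
    (hy : ∀ S, 0 ≤ y S)
    (hfeas : ∀ Z, gfun E y Z ≤ C Z)
    (hall : E.filter (fun S => Mset E C y ∩ S = ∅) = ∅) :
    ∃ (M : Finset V) (y' : Finset V → ℝ),
      (∀ S ∈ E, (M ∩ S).Nonempty) ∧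
      (∀ S, 0 ≤ y' S) ∧
      (∀ Z : Finset V, gfun E y' Z ≤ C Z) ∧
      gfun E y' M = C M := by
  refine ⟨Mset E C y, y, ?_, hy, hfeas, Mset_tight E C y hsub hempty hfeas⟩
  intro S hS
  rw [Finset.nonempty_iff_ne_empty]
  intro h0
  have : S ∈ E.filter (fun S => Mset E C y ∩ S = ∅) := Finset.mem_filter.mpr ⟨hS, h0⟩
  rw [hall] at this
  exact absurd this (Finset.notMem_empty S)

private lemma key_lemma (E : Finset (Finset V))
    (hE : ∀ S ∈ E, S.Nonempty) (C : Finset V → ℝ)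
    (hsub : ∀ X Y : Finset V, C (X ∩ Y) + C (X ∪ Y) ≤ C X + C Y)
    (hempty : C ∅ = 0) :
    ∀ n (y : Finset V → ℝ), (∀ S, 0 ≤ y S) → (∀ Z, gfun E y Z ≤ C Z) →
      (E.filter (fun S => Mset E C y ∩ S = ∅)).card ≤ n →
      ∃ (M : Finset V) (y' : Finset V → ℝ),
        (∀ S ∈ E, (M ∩ S).Nonempty) ∧
        (∀ S, 0 ≤ y' S) ∧
        (∀ Z : Finset V, gfun E y' Z ≤ C Z) ∧
        gfun E y' M = C M := by
  classical
  intro n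
  induction n with
  | zero =>
    intro y hy hfeas hcard
    exact finish_case E C y hsub hempty hy hfeas
      (Finset.card_eq_zero.mp (Nat.le_zero.mp hcard))
  | succ n ih =>
    intro y hy hfeas hcard
    by_cases hall : E.filter (fun S => Mset E C y ∩ S = ∅) = ∅
    · exact finish_case E C y hsub hempty hy hfeas hall
    obtain ⟨S, hSf⟩ := Finset.nonempty_of_ne_empty hall
    obtain ⟨hSE, hMS⟩ := Finset.mem_filter.mp hSf
    -- the set of subsets intersecting S
    set P : Finset (Finset V) :=
      (univ : Finset (Finset V)).filter (fun Z => (Z ∩ S).Nonempty) with hPdef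
    have hPne : P.Nonempty := ⟨S, by simp [hPdef, Finset.inter_self, hE S hSE]⟩
    set f : Finset V → ℝ := fun Z => (C Z - gfun E y Z) / (Z ∩ S).card with hfdef
    set ε : ℝ := P.inf' hPne f with hεdef
    have hpos : ∀ Z ∈ P, 0 < f Z := by
      intro Z hZ
      have hZS : (Z ∩ S).Nonempty := (Finset.mem_filter.mp hZ).2
      have hlt : gfun E y Z < C Z := by
        rcases lt_or_eq_of_le (hfeas Z) with h | h
        · exact h
        · exfalso
          have hsubM : Z ⊆ Mset E C y := tight_subset_Mset E C y h
          have : (Z ∩ S) ⊆ Mset E C y ∩ S :=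
            Finset.inter_subset_inter hsubM (Finset.Subset.refl S)
          rw [hMS] at this
          exact hZS.ne_empty (Finset.subset_empty.mp this)
      have hcpos : (0:ℝ) < (Z ∩ S).card := by
        exact_mod_cast Finset.card_pos.mpr hZS
      exact div_pos (by linarith) hcpos
    have hεpos : 0 < ε := by
      rw [hεdef, Finset.lt_inf'_iff]
      exact hpos
    set y' : Finset V → ℝ := fun T => y T + if T = S then ε else 0 with hy'def
    have hz' : ∀ u, (∑ T ∈ E.filter (fun T => u ∈ T), y' T)
        = (∑ T ∈ E.filter (fun T => u ∈ T), y T) + (if u ∈ S then ε else 0) := by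
      intro u
      simp only [hy'def, Finset.sum_add_distrib]
      congr 1
      rw [Finset.sum_ite_eq' (E.filter (fun T => u ∈ T)) S (fun _ => ε)]
      simp [Finset.mem_filter, hSE]
    have hg' : ∀ Z, gfun E y' Z = gfun E y Z + (Z ∩ S).card * ε := by
      intro Z
      unfold gfun
      simp only [hz', Finset.sum_add_distrib]
      congr 1
      rw [Finset.sum_ite_mem Z S (fun _ => ε), Finset.sum_const, nsmul_eq_mul]
    have hfeas' : ∀ Z, gfun E y' Z ≤ C Z := by
      intro Z
      rw [hg' Z]
      rcases (Z ∩ S).eq_empty_or_nonempty with h | h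
      · simpa [h] using hfeas Z
      · have hZP : Z ∈ P := Finset.mem_filter.mpr ⟨Finset.mem_univ _, h⟩
        have hle : ε ≤ f Z := Finset.inf'_le f hZP
        have hcpos : (0:ℝ) < (Z ∩ S).card := by
          exact_mod_cast Finset.card_pos.mpr h
        rw [hfdef] at hle
        have := (le_div_iff₀ hcpos).mp hle
        linarith [this]
    obtain ⟨Z₀, hZ₀P, hZ₀eq⟩ := Finset.exists_mem_eq_inf' hPne f
    have hZ₀S : (Z₀ ∩ S).Nonempty := (Finset.mem_filter.mp hZ₀P).2
    have hc0 : ((Z₀ ∩ S).card : ℝ) ≠ 0 := by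
      exact_mod_cast (Finset.card_pos.mpr hZ₀S).ne'
    have htight : gfun E y' Z₀ = C Z₀ := by
      rw [hg' Z₀, hεdef, hZ₀eq, hfdef]
      field_simp
      ring
    have hsubM : Z₀ ⊆ Mset E C y' := tight_subset_Mset E C y' htight
    have hMS' : (Mset E C y' ∩ S).Nonempty :=
      hZ₀S.mono (Finset.inter_subset_inter hsubM (Finset.Subset.refl S))
    have hMtight : gfun E y (Mset E C y) = C (Mset E C y) :=
      Mset_tight E C y hsub hempty hfeas
    have hMtight' : gfun E y' (Mset E C y) = C (Mset E C y) := by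
      rw [hg', hMS]
      simp [hMtight]
    have hMM : Mset E C y ⊆ Mset E C y' := tight_subset_Mset E C y' hMtight'
    have hsubset : E.filter (fun T => Mset E C y' ∩ T = ∅)
        ⊆ (E.filter (fun T => Mset E C y ∩ T = ∅)).erase S := by
      intro T hT
      obtain ⟨hTE, hT0⟩ := Finset.mem_filter.mp hT
      refine Finset.mem_erase.mpr ⟨?_, Finset.mem_filter.mpr ⟨hTE, ?_⟩⟩
      · rintro rfl
        exact hMS'.ne_empty hT0
      · have : Mset E C y ∩ T ⊆ Mset E C y' ∩ T :=
          Finset.inter_subset_inter hMM (Finset.Subset.refl T)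
        rw [hT0] at this
        exact Finset.subset_empty.mp this
    have hcard' : (E.filter (fun T => Mset E C y' ∩ T = ∅)).card ≤ n := by
      have h1 := Finset.card_le_card hsubset
      rw [Finset.card_erase_of_mem hSf] at h1
      have h2 : 1 ≤ (E.filter (fun T => Mset E C y ∩ T = ∅)).card :=
        Finset.card_pos.mpr ⟨S, hSf⟩
      omega
    have hy' : ∀ T, 0 ≤ y' T := by
      intro T
      simp only [hy'def]
      have : (0:ℝ) ≤ if T = S then ε else 0 := by
        split <;> [exact le_of_lt hεpos; exact le_refl 0]
      linarith [hy T]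
    exact ih y' hy' hfeas' hcard'

end Aux

/-- for every finite hypergraph with nonempty hyperedges and every monotone
submodular set function `C` with `C ∅ = 0`, there exists a complementary pair: a hitting
set `M` and a feasible dual `y` (nonnegative, with `∑_{u∈Z} z u ≤ C Z` for all `Z`, where
`z u = ∑_{S ∋ u} y S`) such that `∑_{u∈M} z u = C M`. -/
theorem stmt_17 {V : Type*} [Fintype V] [DecidableEq V]
    (E : Finset (Finset V))
    (hE : ∀ S ∈ E, S.Nonempty)
    (C : Finset V → ℝ)
    (hmono : ∀ ⦃X Y : Finset V⦄, X ⊆ Y → C X ≤ C Y)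
    (hsub : ∀ X Y : Finset V, C (X ∩ Y) + C (X ∪ Y) ≤ C X + C Y)
    (hempty : C ∅ = 0) :
    ∃ (M : Finset V) (y : Finset V → ℝ),
      (∀ S ∈ E, (M ∩ S).Nonempty) ∧
      (∀ S, 0 ≤ y S) ∧
      (∀ Z : Finset V, ∑ u ∈ Z, (∑ S ∈ E.filter (fun S => u ∈ S), y S) ≤ C Z) ∧
      ∑ u ∈ M, (∑ S ∈ E.filter (fun S => u ∈ S), y S) = C M := by
  classical
  have h0feas : ∀ Z, gfun E (fun _ => 0) Z ≤ C Z := by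
    intro Z
    have : gfun E (fun _ => (0:ℝ)) Z = 0 := by simp [gfun]
    rw [this, ← hempty]
    exact hmono (Finset.empty_subset Z)
  obtain ⟨M, y, h1, h2, h3, h4⟩ := key_lemma E hE C hsub hempty
    (E.filter (fun S => Mset E C (fun _ => 0) ∩ S = ∅)).card (fun _ => 0)
    (fun _ => le_refl 0) h0feas (le_refl _)
  exact ⟨M, y, h1, h2, h3, h4⟩
end

section
/- Let (M, y) be a complementary pair for the submodular hitting set instance, set z(u) = ∑_{S : u∈S} y(S), and let c̃ be a vector in the submodular base polyhedron B(C) with c̃(u) ≥ z(u) for all u ∈ V and c̃(u) = z(u) for all u ∈ M. Consider the strategy profile of the Submodular Mafia Hitting Set Game in which the Godfather plays c̃, M is the set of mafiosi, C = V∖M are civilians, and the normalized ransoms of each mafioso m are chosen so that the actual ransom paid on each club S containing m is r(m,S) = r₀(m,S)·c̃(m) = y(S). Then this strategy profile is a pure Nash equilibrium. -/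
open Finset
open scoped Classical

namespace MafiaSub

variable {V : Type*} [Fintype V] [DecidableEq V]

noncomputable section

/-- `ct` lies in the submodular base polyhedron `B(C)`:
nonnegative, `∑_{u∈Z} ct u ≤ C Z` for every proper subset `Z ⊊ V`, and
`∑_{u∈V} ct u = C V`. -/
def InBase (C : Finset V → ℝ) (ct : V → ℝ) : Prop :=
  (∀ v, 0 ≤ ct v) ∧
  (∀ Z : Finset V, Z ≠ Finset.univ → ∑ u ∈ Z, ct u ≤ C Z) ∧
  ∑ u : V, ct u = C Finset.univ

/-- Valid normalized ransoms: nonnegative, `r₀ m S = 0` unless `m` is a mafioso belonging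
to the club `S ∈ 𝓔`, and every mafioso's normalized ransoms sum to `1`. -/
def ValidR0 (E : Finset (Finset V)) (M : Finset V) (r₀ : V → Finset V → ℝ) : Prop :=
  (∀ m S, 0 ≤ r₀ m S) ∧
  (∀ m S, m ∉ M ∨ m ∉ S ∨ S ∉ E → r₀ m S = 0) ∧
  (∀ m ∈ M, ∑ S ∈ E.filter (fun S => m ∈ S), r₀ m S = 1)

/-- The demand `D(v) = (1/(d-1)) ∑_{S ∋ v} ∑_{m ∈ (M∩S)∖{v}} r(m,S)` asked from agent `v`,
where `r` are the actual ransoms. -/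
def demand (d : ℕ) (E : Finset (Finset V)) (M : Finset V)
    (r : V → Finset V → ℝ) (v : V) : ℝ :=
  (1 / ((d : ℝ) - 1)) * ∑ S ∈ E.filter (fun S => v ∈ S), ∑ m ∈ (M ∩ S).erase v, r m S

/-- Utility of a vertex agent `v`, with budgets `ct` and actual ransoms `r`
(as in the Mafia Hitting Set Game). -/
def vertexUtility (d : ℕ) (E : Finset (Finset V)) (ct : V → ℝ) (T : ℝ)
    (M : Finset V) (r : V → Finset V → ℝ) (v : V) : ℝ :=
  if v ∈ M then
    -ct v +
      (∑ S ∈ E.filter (fun S => v ∈ S),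
        (r v S / ((d : ℝ) - 1)) *
          ((((S.filter fun u => ¬(u ∈ M ∧ ct u < demand d E M r u)).erase v).card : ℝ) +
            ∑ u ∈ (S.filter fun u => u ∈ M ∧ ct u < demand d E M r u).erase v,
              ct u / demand d E M r u)) -
      min (demand d E M r v) (ct v)
  else
    -demand d E M r v - (if ∃ S ∈ E, v ∈ S ∧ M ∩ S = ∅ then T else 0)

/-- `(M', r₀')` is a unilateral deviation of vertex agent `v` from `(M, r₀)`. -/
def Deviation (v : V) (M M' : Finset V) (r₀ r₀' : V → Finset V → ℝ) : Prop :=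
  (∀ u, u ≠ v → (u ∈ M' ↔ u ∈ M)) ∧ ∀ u S, u ≠ v → r₀' u S = r₀ u S

/-- `(M, ct, r₀)` is a pure Nash equilibrium of the Submodular Mafia Hitting Set Game:
the profile is valid (the Godfather's budget vector `ct` lies in `B(C)` and the normalized
ransoms are valid), no vertex agent can strictly increase his utility by a unilateral
deviation, and the Godfather cannot strictly increase his utility `∑_{v∈M} ct v` by choosing
another budget vector in `B(C)`. -/
def IsNashEq (d : ℕ) (E : Finset (Finset V)) (C : Finset V → ℝ) (T : ℝ)
    (ct : V → ℝ) (M : Finset V) (r₀ : V → Finset V → ℝ) : Prop :=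
  InBase C ct ∧ ValidR0 E M r₀ ∧
  (∀ (v : V) (M' : Finset V) (r₀' : V → Finset V → ℝ),
      ValidR0 E M' r₀' → Deviation v M M' r₀ r₀' →
        vertexUtility d E ct T M' (fun m S => r₀' m S * ct m) v ≤
          vertexUtility d E ct T M (fun m S => r₀ m S * ct m) v) ∧
  (∀ ct' : V → ℝ, InBase C ct' → ∑ v ∈ M, ct' v ≤ ∑ v ∈ M, ct v)

/-- let `(M, y)` be a complementary pair for the submodular hitting set
instance, `z u = ∑_{S ∋ u} y S`, and let `ct ∈ B(C)` with `ct ≥ z` everywhere and `ct = z`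
on `M`.  If the normalized ransoms `r₀` are valid and chosen so that the actual ransom of
each mafioso `m` on each club `S ∋ m` is `r₀(m,S)·ct(m) = y S`, then the strategy profile
`(M, ct, r₀)` is a pure Nash equilibrium of the Submodular Mafia Hitting Set Game. -/
theorem stmt_18 (d : ℕ) (hd : 2 ≤ d) (E : Finset (Finset V))
    (hunif : ∀ S ∈ E, S.card = d)
    (C : Finset V → ℝ)
    (hmono : ∀ ⦃X Y : Finset V⦄, X ⊆ Y → C X ≤ C Y)
    (hsub : ∀ X Y : Finset V, C (X ∩ Y) + C (X ∪ Y) ≤ C X + C Y)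
    (hempty : C ∅ = 0)
    (T : ℝ) (hT : 2 * C Finset.univ < T)
    (M : Finset V) (y : Finset V → ℝ)
    (hM : ∀ S ∈ E, (M ∩ S).Nonempty)
    (hy0 : ∀ S, 0 ≤ y S)
    (hyfeas : ∀ Z : Finset V, ∑ u ∈ Z, (∑ S ∈ E.filter (fun S => u ∈ S), y S) ≤ C Z)
    (htight : ∑ u ∈ M, (∑ S ∈ E.filter (fun S => u ∈ S), y S) = C M)
    (ct : V → ℝ) (hbase : InBase C ct)
    (hct_ge : ∀ u : V, ∑ S ∈ E.filter (fun S => u ∈ S), y S ≤ ct u)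
    (hct_eq : ∀ u ∈ M, ct u = ∑ S ∈ E.filter (fun S => u ∈ S), y S)
    (r₀ : V → Finset V → ℝ) (hr₀ : ValidR0 E M r₀)
    (hransom : ∀ m ∈ M, ∀ S ∈ E, m ∈ S → r₀ m S * ct m = y S) :
    IsNashEq d E C T ct M r₀ := by
  classical
  have hct0 : ∀ u, 0 ≤ ct u := hbase.1
  have hd1 : (0:ℝ) < (d:ℝ) - 1 := by
    have : (2:ℝ) ≤ (d:ℝ) := by exact_mod_cast hd
    linarith
  have hd' : 1 ≤ d := le_trans one_le_two hd
  -- demand is at most the budget, for every agent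
  have hdem_le : ∀ u : V, demand d E M (fun m S => r₀ m S * ct m) u ≤ ct u := by
    intro u
    have h1 : demand d E M (fun m S => r₀ m S * ct m) u
        ≤ (1 / ((d:ℝ) - 1)) * ∑ S ∈ E.filter (fun S => u ∈ S), (((d:ℝ) - 1) * y S) := by
      unfold demand
      refine mul_le_mul_of_nonneg_left ?_ (by positivity)
      refine Finset.sum_le_sum fun S hS => ?_
      rw [Finset.mem_filter] at hS
      have hinner : ∑ m ∈ (M ∩ S).erase u, r₀ m S * ct m
          = (((M ∩ S).erase u).card : ℝ) * y S := by
        rw [Finset.sum_congr rfl (fun m hm => ?_), Finset.sum_const, nsmul_eq_mul]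
        have hm' := Finset.mem_of_mem_erase hm
        rw [Finset.mem_inter] at hm'
        exact hransom m hm'.1 S hS.1 hm'.2
      rw [hinner]
      refine mul_le_mul_of_nonneg_right ?_ (hy0 S)
      have hcard : ((M ∩ S).erase u).card ≤ (S.erase u).card :=
        Finset.card_le_card (Finset.erase_subset_erase _ Finset.inter_subset_right)
      have hSe : (S.erase u).card = d - 1 := by
        rw [Finset.card_erase_of_mem hS.2, hunif S hS.1]
      calc (((M ∩ S).erase u).card : ℝ) ≤ ((S.erase u).card : ℝ) := by exact_mod_cast hcard
        _ = (d:ℝ) - 1 := by rw [hSe]; push_cast [hd']; ring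
    calc demand d E M (fun m S => r₀ m S * ct m) u
        ≤ (1 / ((d:ℝ) - 1)) * ∑ S ∈ E.filter (fun S => u ∈ S), (((d:ℝ) - 1) * y S) := h1
      _ = ∑ S ∈ E.filter (fun S => u ∈ S), y S := by
          rw [← Finset.mul_sum, ← mul_assoc]
          field_simp
      _ ≤ ct u := hct_ge u
  refine ⟨hbase, hr₀, ?_, ?_⟩
  · -- vertex deviations
    intro v M' r₀' hvalid' hdev
    set r : V → Finset V → ℝ := fun m S => r₀ m S * ct m with hr
    set r' : V → Finset V → ℝ := fun m S => r₀' m S * ct m with hr'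
    -- demand on v is unchanged by v's own deviation
    have hdem_dev : demand d E M' r' v = demand d E M r v := by
      unfold demand
      congr 1
      refine Finset.sum_congr rfl fun S hS => ?_
      have hset : (M' ∩ S).erase v = (M ∩ S).erase v := by
        ext u
        simp only [Finset.mem_erase, Finset.mem_inter]
        constructor
        · rintro ⟨h1, h2, h3⟩; exact ⟨h1, (hdev.1 u h1).1 h2, h3⟩
        · rintro ⟨h1, h2, h3⟩; exact ⟨h1, (hdev.1 u h1).2 h2, h3⟩
      rw [hset]
      refine Finset.sum_congr rfl fun m hm => ?_
      simp only [hr, hr']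
      rw [hdev.2 m S (Finset.ne_of_mem_erase hm)]
    -- equilibrium utility is -demand v
    have hequt : vertexUtility d E ct T M r v = -(demand d E M r v) := by
      unfold vertexUtility
      by_cases hv : v ∈ M
      · rw [if_pos hv]
        have hF : ∑ S ∈ E.filter (fun S => v ∈ S),
            (r v S / ((d : ℝ) - 1)) *
              ((((S.filter fun u => ¬(u ∈ M ∧ ct u < demand d E M r u)).erase v).card : ℝ) +
                ∑ u ∈ (S.filter fun u => u ∈ M ∧ ct u < demand d E M r u).erase v,
                  ct u / demand d E M r u) = ct v := by
          have hstep : ∀ S ∈ E.filter (fun S => v ∈ S),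
              (r v S / ((d : ℝ) - 1)) *
                ((((S.filter fun u => ¬(u ∈ M ∧ ct u < demand d E M r u)).erase v).card : ℝ) +
                  ∑ u ∈ (S.filter fun u => u ∈ M ∧ ct u < demand d E M r u).erase v,
                    ct u / demand d E M r u) = r v S := by
            intro S hS
            rw [Finset.mem_filter] at hS
            have hpos : S.filter (fun u => u ∈ M ∧ ct u < demand d E M r u) = ∅ := by
              refine Finset.filter_false_of_mem fun u _ => ?_
              rintro ⟨-, hlt⟩
              exact absurd (hdem_le u) (not_le.2 hlt)
            have hneg : S.filter (fun u => ¬(u ∈ M ∧ ct u < demand d E M r u)) = S := by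
              refine Finset.filter_true_of_mem fun u _ => ?_
              rintro ⟨-, hlt⟩
              exact absurd (hdem_le u) (not_le.2 hlt)
            rw [hpos, hneg]
            simp only [Finset.erase_empty, Finset.sum_empty, add_zero]
            rw [Finset.card_erase_of_mem hS.2, hunif S hS.1]
            have hcast : ((d - 1 : ℕ) : ℝ) = (d:ℝ) - 1 := by push_cast [hd']; ring
            rw [hcast]
            field_simp
          rw [Finset.sum_congr rfl hstep]
          have : ∑ S ∈ E.filter (fun S => v ∈ S), r v S
              = (∑ S ∈ E.filter (fun S => v ∈ S), r₀ v S) * ct v := by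
            rw [Finset.sum_mul]
          rw [this, hr₀.2.2 v hv, one_mul]
        rw [hF, min_eq_left (hdem_le v)]
        ring
      · rw [if_neg hv]
        have hnex : ¬ ∃ S ∈ E, v ∈ S ∧ M ∩ S = ∅ := by
          rintro ⟨S, hSE, -, hMS⟩
          exact (hM S hSE).ne_empty hMS
        rw [if_neg hnex]
        ring
    rw [hequt]
    -- deviation utility bound
    unfold vertexUtility
    by_cases hv' : v ∈ M'
    · rw [if_pos hv']
      have hF' : ∑ S ∈ E.filter (fun S => v ∈ S),
          (r' v S / ((d : ℝ) - 1)) *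
            ((((S.filter fun u => ¬(u ∈ M' ∧ ct u < demand d E M' r' u)).erase v).card : ℝ) +
              ∑ u ∈ (S.filter fun u => u ∈ M' ∧ ct u < demand d E M' r' u).erase v,
                ct u / demand d E M' r' u) ≤ ct v := by
        have hstep : ∀ S ∈ E.filter (fun S => v ∈ S),
            (r' v S / ((d : ℝ) - 1)) *
              ((((S.filter fun u => ¬(u ∈ M' ∧ ct u < demand d E M' r' u)).erase v).card : ℝ) +
                ∑ u ∈ (S.filter fun u => u ∈ M' ∧ ct u < demand d E M' r' u).erase v,
                  ct u / demand d E M' r' u) ≤ r' v S := by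
          intro S hS
          rw [Finset.mem_filter] at hS
          have hrnn : 0 ≤ r' v S / ((d:ℝ) - 1) := by
            have : 0 ≤ r' v S := mul_nonneg (hvalid'.1 v S) (hct0 v)
            positivity
          have hbr : (((S.filter fun u => ¬(u ∈ M' ∧ ct u < demand d E M' r' u)).erase v).card : ℝ) +
              ∑ u ∈ (S.filter fun u => u ∈ M' ∧ ct u < demand d E M' r' u).erase v,
                ct u / demand d E M' r' u ≤ (d:ℝ) - 1 := by
            set p : V → Prop := fun u => u ∈ M' ∧ ct u < demand d E M' r' u with hp
            have hsum_le : ∑ u ∈ (S.filter p).erase v, ct u / demand d E M' r' u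
                ≤ (((S.filter p).erase v).card : ℝ) := by
              calc ∑ u ∈ (S.filter p).erase v, ct u / demand d E M' r' u
                  ≤ ∑ _u ∈ (S.filter p).erase v, (1:ℝ) := by
                    refine Finset.sum_le_sum fun u hu => ?_
                    have hu' := (Finset.mem_filter.1 (Finset.mem_of_mem_erase hu)).2
                    have hlt : ct u < demand d E M' r' u := hu'.2
                    have hpos : 0 < demand d E M' r' u := lt_of_le_of_lt (hct0 u) hlt
                    rw [div_le_one hpos]
                    exact le_of_lt hlt
                _ = (((S.filter p).erase v).card : ℝ) := by simp
            have hcards : ((S.filter fun u => ¬ p u).erase v).card + ((S.filter p).erase v).card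
                = d - 1 := by
              rw [← Finset.filter_erase, ← Finset.filter_erase, Nat.add_comm,
                Finset.card_filter_add_card_filter_not (p := p),
                Finset.card_erase_of_mem hS.2, hunif S hS.1]
            have hcast : (((S.filter fun u => ¬ p u).erase v).card : ℝ)
                + (((S.filter p).erase v).card : ℝ) = (d:ℝ) - 1 := by
              have := hcards
              have h2 : (((S.filter fun u => ¬ p u).erase v).card
                  + ((S.filter p).erase v).card : ℝ) = ((d - 1 : ℕ) : ℝ) := by
                exact_mod_cast congrArg (Nat.cast : ℕ → ℝ) this
              push_cast [hd'] at h2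
              linarith
            linarith
          calc (r' v S / ((d:ℝ) - 1)) * _ ≤ (r' v S / ((d:ℝ) - 1)) * ((d:ℝ) - 1) :=
                mul_le_mul_of_nonneg_left hbr hrnn
            _ = r' v S := by field_simp
        calc ∑ S ∈ E.filter (fun S => v ∈ S), _ ≤ ∑ S ∈ E.filter (fun S => v ∈ S), r' v S :=
              Finset.sum_le_sum hstep
          _ = (∑ S ∈ E.filter (fun S => v ∈ S), r₀' v S) * ct v := by rw [Finset.sum_mul]
          _ = ct v := by rw [hvalid'.2.2 v hv', one_mul]
      have hmin : min (demand d E M' r' v) (ct v) = demand d E M r v := by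
        rw [hdem_dev, min_eq_left (hdem_le v)]
      rw [hmin]
      linarith [hF']
    · rw [if_neg hv']
      have hT0 : (0:ℝ) ≤ T := by
        have h0 : (0:ℝ) ≤ C Finset.univ := hempty ▸ hmono (Finset.empty_subset _)
        linarith
      have hpen : (0:ℝ) ≤ (if ∃ S ∈ E, v ∈ S ∧ M' ∩ S = ∅ then T else 0) := by
        split <;> simp [hT0]
      rw [hdem_dev]
      linarith
  · -- Godfather deviations
    intro ct' hct'
    have h1 : ∑ v ∈ M, ct' v ≤ C M := by
      by_cases hMu : M = Finset.univ
      · subst hMu; exact le_of_eq hct'.2.2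
      · exact hct'.2.1 M hMu
    have h2 : ∑ v ∈ M, ct v = C M := by
      rw [Finset.sum_congr rfl (fun u hu => hct_eq u hu), htight]
    linarith

end
end MafiaSub
end

section
/- Let the strategy profile (M, c̃, r₀) of the Submodular Mafia Hitting Set Game be a pure Nash equilibrium. Then M is a hitting set (M ∩ S ≠ ∅ for every S ∈ 𝓔), ∑_{v∈M} c̃(v) = C(M), and C(M) ≤ d·C(M*) for every hitting set M*; that is, the price of anarchy of the Submodular Mafia Hitting Set Game is at most d. -/
open Finset
open scoped Classical

namespace MafiaSub

variable {V : Type*} [Fintype V] [DecidableEq V]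

noncomputable section

/-! ### Auxiliary lemmas -/

lemma sum_le_sum_erase_add (s : Finset V) (f : V → ℝ) (hf : ∀ x, 0 ≤ f x) (a : V) :
    ∑ x ∈ s, f x ≤ (∑ x ∈ s.erase a, f x) + f a := by
  by_cases h : a ∈ s
  · exact le_of_eq (Finset.sum_erase_add s f h).symm
  · rw [Finset.erase_eq_of_notMem h]
    exact le_add_of_nonneg_right (hf a)

lemma erase_sum_comm (A B : Finset V) (f : V → V → ℝ) :
    ∑ m ∈ A, ∑ u ∈ B.erase m, f m u = ∑ u ∈ B, ∑ m ∈ A.erase u, f m u := by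
  have h : ∀ (s : Finset V) (a : V) (g : V → ℝ),
      ∑ x ∈ s.erase a, g x = ∑ x ∈ s, if x = a then 0 else g x := by
    intro s a g
    rw [← Finset.filter_ne' s a, Finset.sum_filter]
    exact Finset.sum_congr rfl fun x _ => by by_cases hx : x = a <;> simp [hx]
  simp only [h]
  rw [Finset.sum_comm]
  apply Finset.sum_congr rfl; intro u _
  apply Finset.sum_congr rfl; intro m _
  by_cases hum : u = m
  · subst hum; simp
  · rw [if_neg hum, if_neg (fun hmu => hum hmu.symm)]

/-- one greedy step for building a vector in the base polytope -/
lemma chain_step (C : Finset V → ℝ)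
    (hmono : ∀ ⦃X Y : Finset V⦄, X ⊆ Y → C X ≤ C Y)
    (hsub : ∀ X Y : Finset V, C (X ∩ Y) + C (X ∪ Y) ≤ C X + C Y)
    {B : Finset V} {w : V → ℝ} (x : V) (hx : x ∉ B)
    (h0 : ∀ v, 0 ≤ w v) (hsupp : ∀ v, v ∉ B → w v = 0)
    (hZ : ∀ Z : Finset V, ∑ u ∈ Z, w u ≤ C (Z ∩ B)) (hB : ∑ u ∈ B, w u = C B) :
    ∃ w' : V → ℝ, (∀ v, 0 ≤ w' v) ∧ (∀ v, v ∉ insert x B → w' v = 0) ∧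
      (∀ Z : Finset V, ∑ u ∈ Z, w' u ≤ C (Z ∩ insert x B)) ∧
      (∑ u ∈ insert x B, w' u = C (insert x B)) ∧
      (∀ s : Finset V, x ∉ s → ∑ u ∈ s, w' u = ∑ u ∈ s, w u) := by
  set m := C (insert x B) - C B with hm
  have hm0 : 0 ≤ m := by
    have := hmono (Finset.subset_insert x B); simp only [hm]; linarith
  refine ⟨fun u => w u + if u = x then m else 0, ?_, ?_, ?_, ?_, ?_⟩
  · intro v; simp only []; by_cases hv : v = x
    · rw [if_pos hv]; have := h0 v; linarith
    · rw [if_neg hv]; simpa using h0 v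
  · intro v hv
    have hvB : v ∉ B := fun h => hv (Finset.mem_insert_of_mem h)
    have hvx : v ≠ x := fun h => hv (h ▸ Finset.mem_insert_self x B)
    simp only []
    rw [hsupp v hvB, if_neg hvx, add_zero]
  · intro Z
    rw [Finset.sum_add_distrib, Finset.sum_ite_eq' Z x (fun _ => m)]
    by_cases hxZ : x ∈ Z
    · rw [if_pos hxZ]
      have h1 : Z ∩ insert x B = insert x (Z ∩ B) := by
        ext u
        simp only [Finset.mem_inter, Finset.mem_insert]
        constructor
        · rintro ⟨huZ, hu | hu⟩
          · exact Or.inl hu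
          · exact Or.inr ⟨huZ, hu⟩
        · rintro (hu | ⟨huZ, huB⟩)
          · exact ⟨hu ▸ hxZ, Or.inl hu⟩
          · exact ⟨huZ, Or.inr huB⟩
      have h3 : insert x (Z ∩ B) ∩ B = Z ∩ B := by
        ext u
        simp only [Finset.mem_inter, Finset.mem_insert]
        constructor
        · rintro ⟨hu | hu, huB⟩
          · exact absurd (hu ▸ huB) hx
          · exact hu
        · rintro ⟨huZ, huB⟩
          exact ⟨Or.inr ⟨huZ, huB⟩, huB⟩
      have h4 : insert x (Z ∩ B) ∪ B = insert x B := by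
        ext u
        simp only [Finset.mem_union, Finset.mem_insert, Finset.mem_inter]
        constructor
        · rintro ((hu | hu) | hu)
          · exact Or.inl hu
          · exact Or.inr hu.2
          · exact Or.inr hu
        · rintro (hu | hu)
          · exact Or.inl (Or.inl hu)
          · exact Or.inr hu
      have h2 := hsub (insert x (Z ∩ B)) B
      rw [h3, h4] at h2
      have h5 := hZ Z
      rw [h1]
      simp only [hm]
      linarith
    · rw [if_neg hxZ, add_zero]
      have h1 : Z ∩ insert x B = Z ∩ B := by
        ext u
        simp only [Finset.mem_inter, Finset.mem_insert]
        constructor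
        · rintro ⟨huZ, hu | hu⟩
          · exact absurd (hu ▸ huZ) hxZ
          · exact ⟨huZ, hu⟩
        · rintro ⟨huZ, huB⟩
          exact ⟨huZ, Or.inr huB⟩
      rw [h1]; exact hZ Z
  · rw [Finset.sum_add_distrib, Finset.sum_ite_eq' (insert x B) x (fun _ => m),
      if_pos (Finset.mem_insert_self x B), Finset.sum_insert hx, hsupp x hx, zero_add, hB]
    simp only [hm]; ring
  · intro s hs
    rw [Finset.sum_add_distrib, Finset.sum_ite_eq' s x (fun _ => m), if_neg hs, add_zero]

lemma exists_base_chain (C : Finset V → ℝ)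
    (hmono : ∀ ⦃X Y : Finset V⦄, X ⊆ Y → C X ≤ C Y)
    (hsub : ∀ X Y : Finset V, C (X ∩ Y) + C (X ∪ Y) ≤ C X + C Y)
    (hempty : C ∅ = 0) :
    ∀ B : Finset V, ∃ w : V → ℝ, (∀ v, 0 ≤ w v) ∧ (∀ v, v ∉ B → w v = 0) ∧
      (∀ Z : Finset V, ∑ u ∈ Z, w u ≤ C (Z ∩ B)) ∧ ∑ u ∈ B, w u = C B := by
  intro B
  induction B using Finset.induction_on with
  | empty =>
    refine ⟨fun _ => 0, fun _ => le_refl 0, fun _ _ => rfl, fun Z => ?_, by simp [hempty]⟩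
    simp [hempty]
  | @insert x B hx ih =>
    obtain ⟨w, h0, hsupp, hZ, hB⟩ := ih
    obtain ⟨w', h0', hsupp', hZ', hB', _⟩ := chain_step C hmono hsub x hx h0 hsupp hZ hB
    exact ⟨w', h0', hsupp', hZ', hB'⟩

lemma exists_base_max (C : Finset V → ℝ)
    (hmono : ∀ ⦃X Y : Finset V⦄, X ⊆ Y → C X ≤ C Y)
    (hsub : ∀ X Y : Finset V, C (X ∩ Y) + C (X ∪ Y) ≤ C X + C Y)
    (hempty : C ∅ = 0) (A : Finset V) :
    ∃ ct' : V → ℝ, ((∀ v, 0 ≤ ct' v) ∧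
      (∀ Z : Finset V, Z ≠ Finset.univ → ∑ u ∈ Z, ct' u ≤ C Z) ∧
      ∑ u : V, ct' u = C Finset.univ) ∧ ∑ v ∈ A, ct' v = C A := by
  suffices h : ∀ Bex : Finset V, ∃ w : V → ℝ, (∀ v, 0 ≤ w v) ∧
      (∀ v, v ∉ A ∪ Bex → w v = 0) ∧
      (∀ Z : Finset V, ∑ u ∈ Z, w u ≤ C (Z ∩ (A ∪ Bex))) ∧
      (∑ u ∈ A, w u = C A) ∧ ∑ u ∈ A ∪ Bex, w u = C (A ∪ Bex) by
    obtain ⟨w, h0, _, hZ, hA, hU⟩ := h Finset.univ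
    have hAU : A ∪ Finset.univ = Finset.univ := by simp
    refine ⟨w, ⟨h0, fun Z _ => ?_, ?_⟩, hA⟩
    · have := hZ Z; rwa [hAU, Finset.inter_univ] at this
    · rw [hAU] at hU; exact hU
  intro Bex
  induction Bex using Finset.induction_on with
  | empty =>
    obtain ⟨w, h0, hsupp, hZ, hB⟩ := exists_base_chain C hmono hsub hempty A
    refine ⟨w, h0, ?_, ?_, hB, ?_⟩
    · simpa using hsupp
    · simpa using hZ
    · simpa using hB
  | @insert x Bex hx ih =>
    obtain ⟨w, h0, hsupp, hZ, hA, hB⟩ := ih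
    by_cases hxAB : x ∈ A ∪ Bex
    · have heq : A ∪ insert x Bex = A ∪ Bex := by
        rw [Finset.union_insert, Finset.insert_eq_of_mem hxAB]
      rw [heq]
      exact ⟨w, h0, hsupp, hZ, hA, hB⟩
    · obtain ⟨w', h0', hsupp', hZ', hB', hpres⟩ :=
        chain_step C hmono hsub x hxAB h0 hsupp hZ hB
      have heq : A ∪ insert x Bex = insert x (A ∪ Bex) := Finset.union_insert _ _ _
      rw [heq]
      refine ⟨w', h0', hsupp', hZ', ?_, hB'⟩
      rw [hpres A (fun hxA => hxAB (Finset.mem_union_left _ hxA))]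
      exact hA

/-- auxiliary: the weight an agent `u` pays per unit demand -/
def wt (d : ℕ) (E : Finset (Finset V)) (ct : V → ℝ) (Mx : Finset V)
    (rx : V → Finset V → ℝ) (u : V) : ℝ :=
  if u ∈ Mx ∧ ct u < demand d E Mx rx u then ct u / demand d E Mx rx u else 1

/-- auxiliary: the income of a mafioso -/
def fplus (d : ℕ) (E : Finset (Finset V)) (ct : V → ℝ) (Mx : Finset V)
    (rx : V → Finset V → ℝ) (v : V) : ℝ :=
  ∑ S ∈ E.filter (fun S => v ∈ S),
    (rx v S / ((d : ℝ) - 1)) * ∑ u ∈ S.erase v, wt d E ct Mx rx u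

lemma mafioso_utility (d : ℕ) (E : Finset (Finset V)) (ct : V → ℝ) (T : ℝ)
    (Mx : Finset V) (rx : V → Finset V → ℝ) (v : V) (hv : v ∈ Mx) :
    vertexUtility d E ct T Mx rx v =
      -ct v + fplus d E ct Mx rx v - min (demand d E Mx rx v) (ct v) := by
  have hbr : ∀ S : Finset V,
      (((S.filter fun u => ¬(u ∈ Mx ∧ ct u < demand d E Mx rx u)).erase v).card : ℝ) +
        ∑ u ∈ (S.filter fun u => u ∈ Mx ∧ ct u < demand d E Mx rx u).erase v,
          ct u / demand d E Mx rx u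
      = ∑ u ∈ S.erase v, wt d E ct Mx rx u := by
    intro S
    unfold wt
    rw [Finset.sum_ite (fun u => ct u / demand d E Mx rx u) (fun _ => (1:ℝ))]
    rw [Finset.filter_erase, Finset.filter_erase, Finset.sum_const, nsmul_eq_mul, mul_one,
      add_comm]
  unfold vertexUtility fplus
  rw [if_pos hv]
  congr 1
  congr 1
  exact Finset.sum_congr rfl fun S _ => by rw [hbr S]

lemma demand_nonneg {d : ℕ} (hd : 2 ≤ d) (E : Finset (Finset V)) (Mx : Finset V)
    (rx : V → Finset V → ℝ) (hrx : ∀ m S, 0 ≤ rx m S) (v : V) :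
    0 ≤ demand d E Mx rx v := by
  unfold demand
  apply mul_nonneg
  · apply one_div_nonneg.mpr
    have : (2:ℝ) ≤ (d:ℝ) := by exact_mod_cast hd
    linarith
  · exact Finset.sum_nonneg fun S _ => Finset.sum_nonneg fun m _ => hrx m S

lemma wt_nonneg {d : ℕ} (hd : 2 ≤ d) (E : Finset (Finset V)) (ct : V → ℝ)
    (hct : ∀ v, 0 ≤ ct v) (Mx : Finset V)
    (rx : V → Finset V → ℝ) (hrx : ∀ m S, 0 ≤ rx m S) (u : V) :
    0 ≤ wt d E ct Mx rx u := by
  unfold wt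
  split_ifs with h
  · exact div_nonneg (hct u) (demand_nonneg hd E Mx rx hrx u)
  · exact zero_le_one

lemma fplus_nonneg {d : ℕ} (hd : 2 ≤ d) (E : Finset (Finset V)) (ct : V → ℝ)
    (hct : ∀ v, 0 ≤ ct v) (Mx : Finset V)
    (rx : V → Finset V → ℝ) (hrx : ∀ m S, 0 ≤ rx m S) (v : V) :
    0 ≤ fplus d E ct Mx rx v := by
  have hd1 : (0:ℝ) ≤ (d:ℝ) - 1 := by
    have : (2:ℝ) ≤ (d:ℝ) := by exact_mod_cast hd
    linarith
  unfold fplus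
  exact Finset.sum_nonneg fun S _ => mul_nonneg (div_nonneg (hrx v S) hd1)
    (Finset.sum_nonneg fun u _ => wt_nonneg hd E ct hct Mx rx hrx u)

lemma demand_eq_of (d : ℕ) (E : Finset (Finset V)) (M M' : Finset V)
    (r r' : V → Finset V → ℝ) (v : V)
    (hM : ∀ S, (M' ∩ S).erase v = (M ∩ S).erase v)
    (hr : ∀ m S, m ≠ v → r' m S = r m S) :
    demand d E M' r' v = demand d E M r v := by
  unfold demand
  congr 1
  apply Finset.sum_congr rfl
  intro S _
  rw [hM S]
  exact Finset.sum_congr rfl fun m hm => hr m S (Finset.mem_erase.1 hm).1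

/-- total demand identity -/
lemma demand_total {d : ℕ} (hd : 2 ≤ d) (E : Finset (Finset V))
    (hunif : ∀ S ∈ E, S.card = d) (Mx : Finset V) (rx : V → Finset V → ℝ) :
    ∑ u : V, demand d E Mx rx u = ∑ S ∈ E, ∑ m ∈ Mx ∩ S, rx m S := by
  have hd1ne : ((d:ℝ) - 1) ≠ 0 := by
    have : (2:ℝ) ≤ (d:ℝ) := by exact_mod_cast hd
    intro h; linarith
  have hinner : ∀ S ∈ E, ∑ u ∈ S, ∑ m ∈ (Mx ∩ S).erase u, rx m S
      = ((d:ℝ) - 1) * ∑ m ∈ Mx ∩ S, rx m S := by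
    intro S hS
    rw [erase_sum_comm S (Mx ∩ S) (fun a b => rx b S), Finset.mul_sum]
    apply Finset.sum_congr rfl
    intro m hm
    rw [Finset.sum_const, nsmul_eq_mul,
      Finset.card_erase_of_mem (Finset.mem_inter.1 hm).2, hunif S hS,
      Nat.cast_sub (by omega : 1 ≤ d), Nat.cast_one, mul_comm]
  unfold demand
  rw [← Finset.mul_sum]
  have hswap : ∑ u : V, ∑ S ∈ E.filter (fun S => u ∈ S), ∑ m ∈ (Mx ∩ S).erase u, rx m S
      = ∑ S ∈ E, ∑ u ∈ S, ∑ m ∈ (Mx ∩ S).erase u, rx m S := by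
    have h1 : ∀ u : V, ∑ S ∈ E.filter (fun S => u ∈ S), ∑ m ∈ (Mx ∩ S).erase u, rx m S
        = ∑ S ∈ E, if u ∈ S then ∑ m ∈ (Mx ∩ S).erase u, rx m S else 0 :=
      fun u => Finset.sum_filter _ _
    simp only [h1]
    rw [Finset.sum_comm]
    apply Finset.sum_congr rfl
    intro S _
    rw [Finset.sum_ite_mem, Finset.univ_inter]
  rw [hswap, Finset.sum_congr rfl hinner, ← Finset.mul_sum, ← mul_assoc, one_div,
    inv_mul_cancel₀ hd1ne, one_mul]

/-- total income identity -/
lemma fplus_total {d : ℕ} (E : Finset (Finset V)) (ct : V → ℝ) (Mx : Finset V)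
    (rx : V → Finset V → ℝ) :
    ∑ m ∈ Mx, fplus d E ct Mx rx m
      = ∑ u : V, wt d E ct Mx rx u * demand d E Mx rx u := by
  unfold fplus
  have h1 : ∀ m : V, ∑ S ∈ E.filter (fun S => m ∈ S),
      (rx m S / ((d:ℝ)-1)) * ∑ u ∈ S.erase m, wt d E ct Mx rx u
      = ∑ S ∈ E, if m ∈ S then (rx m S / ((d:ℝ)-1)) * ∑ u ∈ S.erase m, wt d E ct Mx rx u else 0 :=
    fun m => Finset.sum_filter _ _
  simp only [h1]
  rw [Finset.sum_comm]
  have h2 : ∀ S ∈ E, ∑ m ∈ Mx, (if m ∈ S then (rx m S / ((d:ℝ)-1)) * ∑ u ∈ S.erase m, wt d E ct Mx rx u else 0)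
      = ∑ u ∈ S, wt d E ct Mx rx u * ((1/((d:ℝ)-1)) * ∑ m ∈ (Mx ∩ S).erase u, rx m S) := by
    intro S _
    rw [Finset.sum_ite_mem]
    have h3 : ∀ m ∈ Mx ∩ S, (rx m S / ((d:ℝ)-1)) * ∑ u ∈ S.erase m, wt d E ct Mx rx u
        = ∑ u ∈ S.erase m, (rx m S / ((d:ℝ)-1)) * wt d E ct Mx rx u :=
      fun m _ => Finset.mul_sum _ _ _
    rw [Finset.sum_congr rfl h3, erase_sum_comm (Mx ∩ S) S (fun m u => (rx m S / ((d:ℝ)-1)) * wt d E ct Mx rx u)]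
    apply Finset.sum_congr rfl
    intro u _
    rw [Finset.mul_sum, Finset.mul_sum]
    apply Finset.sum_congr rfl
    intro m _
    ring
  rw [Finset.sum_congr rfl h2]
  have h4 : ∑ u : V, wt d E ct Mx rx u * demand d E Mx rx u
      = ∑ u : V, ∑ S ∈ E, (if u ∈ S then wt d E ct Mx rx u * ((1/((d:ℝ)-1)) * ∑ m ∈ (Mx ∩ S).erase u, rx m S) else 0) := by
    apply Finset.sum_congr rfl
    intro u _
    unfold demand
    rw [Finset.mul_sum, Finset.mul_sum, ← Finset.sum_filter]
  rw [h4, Finset.sum_comm]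
  apply Finset.sum_congr rfl
  intro S _
  rw [Finset.sum_ite_mem, Finset.univ_inter]

lemma demand_spell (d : ℕ) (E : Finset (Finset V)) (Mx : Finset V)
    (rx : V → Finset V → ℝ) (w : V) :
    demand d E Mx rx w
      = (1 / ((d : ℝ) - 1)) * ∑ S ∈ E.filter (fun S => w ∈ S), ∑ m ∈ (Mx ∩ S).erase w, rx m S :=
  rfl

set_option maxHeartbeats 1600000 in
/-- in any pure Nash equilibrium `(M, ct, r₀)` of the Submodular Mafia
Hitting Set Game, `M` is a hitting set, `∑_{v∈M} ct v = C M`, and `C M ≤ d·C M*` for every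
hitting set `M*` (price of anarchy at most `d`). -/
theorem stmt_19 (d : ℕ) (hd : 2 ≤ d) (E : Finset (Finset V))
    (hunif : ∀ S ∈ E, S.card = d)
    (C : Finset V → ℝ)
    (hmono : ∀ ⦃X Y : Finset V⦄, X ⊆ Y → C X ≤ C Y)
    (hsub : ∀ X Y : Finset V, C (X ∩ Y) + C (X ∪ Y) ≤ C X + C Y)
    (hempty : C ∅ = 0)
    (T : ℝ) (hT : 2 * C Finset.univ < T)
    (ct : V → ℝ) (M : Finset V) (r₀ : V → Finset V → ℝ)
    (hnash : IsNashEq d E C T ct M r₀) :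
    (∀ S ∈ E, (M ∩ S).Nonempty) ∧
      (∑ v ∈ M, ct v = C M) ∧
      ∀ Mstar : Finset V, (∀ S ∈ E, (Mstar ∩ S).Nonempty) → C M ≤ d * C Mstar := by
  obtain ⟨hB, hVal, hNashV, hGod⟩ := hnash
  obtain ⟨hct0, hctZ, hctU⟩ := hB
  obtain ⟨hr0, hrZ, hrS⟩ := hVal
  have hdR : (2:ℝ) ≤ (d:ℝ) := by exact_mod_cast hd
  have hd1 : (0:ℝ) < (d:ℝ) - 1 := by linarith
  have hd1ne : ((d:ℝ) - 1) ≠ 0 := ne_of_gt hd1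
  have hfrac : (1:ℝ) - 1/((d:ℝ)-1) = ((d:ℝ)-2)/((d:ℝ)-1) := by
    field_simp
    ring
  have hfrac2 : ((d:ℝ)-1) * ((1:ℝ) - 1/((d:ℝ)-1)) = (d:ℝ)-2 := by
    field_simp
    ring
  set r : V → Finset V → ℝ := fun m S => r₀ m S * ct m with hrdef
  have hr0' : ∀ m S, 0 ≤ r m S := fun m S => mul_nonneg (hr0 m S) (hct0 m)
  have hrsum : ∀ m ∈ M, ∑ S ∈ E.filter (fun S => m ∈ S), r m S = ct m := by
    intro m hm
    have h1 : ∑ S ∈ E.filter (fun S => m ∈ S), r m S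
        = (∑ S ∈ E.filter (fun S => m ∈ S), r₀ m S) * ct m := by
      rw [Finset.sum_mul]
    rw [h1, hrS m hm, one_mul]
  have hctle : ∀ v, ct v ≤ C Finset.univ := by
    intro v
    rw [← hctU]
    exact Finset.single_le_sum (fun u _ => hct0 u) (Finset.mem_univ v)
  have hDnn : ∀ v, 0 ≤ demand d E M r v := demand_nonneg hd E M r hr0'
  -- ==================== PART 1 : M is a hitting set ====================
  have hHit : ∀ S ∈ E, (M ∩ S).Nonempty := by
    intro S hS
    rw [Finset.nonempty_iff_ne_empty]
    intro hMS
    have hSne : S.Nonempty := by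
      rw [← Finset.card_pos, hunif S hS]; omega
    obtain ⟨v, hvS⟩ := hSne
    have hvM : v ∉ M := by
      intro hvM
      have hmem : v ∈ M ∩ S := Finset.mem_inter.2 ⟨hvM, hvS⟩
      rw [hMS] at hmem
      exact Finset.notMem_empty v hmem
    set r₀' : V → Finset V → ℝ := fun u Tc => if u = v then (if Tc = S then 1 else 0) else r₀ u Tc
      with hr₀'
    have hr₀'nn : ∀ m Tc, 0 ≤ r₀' m Tc := by
      intro m Tc
      simp only [hr₀']
      split_ifs
      · exact zero_le_one
      · exact le_refl 0
      · exact hr0 m Tc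
    have hval' : ValidR0 E (insert v M) r₀' := by
      refine ⟨hr₀'nn, ?_, ?_⟩
      · intro m Tc hcase
        simp only [hr₀']
        by_cases hm : m = v
        · subst hm
          rw [if_pos rfl, if_neg]
          intro hTS
          subst hTS
          rcases hcase with h | h | h
          · exact h (Finset.mem_insert_self m M)
          · exact h hvS
          · exact h hS
        · rw [if_neg hm]
          apply hrZ
          rcases hcase with h | h | h
          · exact Or.inl (fun hmM => h (Finset.mem_insert_of_mem hmM))
          · exact Or.inr (Or.inl h)
          · exact Or.inr (Or.inr h)
      · intro m hm
        by_cases hmv : m = v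
        · subst hmv
          have hcong : ∀ Tc ∈ E.filter (fun Tc => m ∈ Tc),
              r₀' m Tc = if Tc = S then (1:ℝ) else 0 := by
            intro Tc _
            simp only [hr₀', eq_self_iff_true, if_true]
          rw [Finset.sum_congr rfl hcong,
            Finset.sum_ite_eq' (E.filter (fun Tc => m ∈ Tc)) S (fun _ => (1:ℝ)),
            if_pos (Finset.mem_filter.2 ⟨hS, hvS⟩)]
        · simp only [hr₀', if_neg hmv]
          apply hrS
          rcases Finset.mem_insert.1 hm with h | h
          · exact absurd h hmv
          · exact h
    have hdev : Deviation v M (insert v M) r₀ r₀' := by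
      constructor
      · intro u hu
        simp [Finset.mem_insert, hu]
      · intro u Tc hu
        simp only [hr₀', if_neg hu]
    have key := hNashV v (insert v M) r₀' hval' hdev
    have hold : vertexUtility d E ct T M r v = -demand d E M r v - T := by
      unfold vertexUtility
      rw [if_neg hvM, if_pos]
      exact ⟨S, hS, hvS, hMS⟩
    rw [hold, mafioso_utility d E ct T (insert v M) _ v (Finset.mem_insert_self v M)] at key
    have hf0 : 0 ≤ fplus d E ct (insert v M) (fun m Tc => r₀' m Tc * ct m) v :=
      fplus_nonneg hd E ct hct0 (insert v M) _
        (fun m Tc => mul_nonneg (hr₀'nn m Tc) (hct0 m)) v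
    have hmin : min (demand d E (insert v M) (fun m Tc => r₀' m Tc * ct m) v) (ct v) ≤ ct v :=
      min_le_right _ _
    linarith [hDnn v, hctle v, hT, key, hf0, hmin]
  -- ==================== PART 2 : budget sum ====================
  have hsumM : ∑ v ∈ M, ct v = C M := by
    obtain ⟨ct', hB', hA'⟩ := exists_base_max C hmono hsub hempty M
    have h1 : ∑ v ∈ M, ct v ≤ C M := by
      by_cases hMu : M = Finset.univ
      · subst hMu; exact le_of_eq hctU
      · exact hctZ M hMu
    have h2 := hGod ct' hB'
    rw [hA'] at h2
    linarith
  -- ==================== ransom totals ====================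
  have hRsum : ∑ S ∈ E, ∑ m ∈ M ∩ S, r m S = ∑ m ∈ M, ct m := by
    have h1 : ∀ S : Finset V, ∑ m ∈ M ∩ S, r m S = ∑ m ∈ M, if m ∈ S then r m S else 0 :=
      fun S => (Finset.sum_ite_mem M S (fun m => r m S)).symm
    simp only [h1]
    rw [Finset.sum_comm]
    apply Finset.sum_congr rfl
    intro m hm
    rw [← Finset.sum_filter, hrsum m hm]
  have hDtot : ∑ u : V, demand d E M r u = ∑ m ∈ M, ct m := by
    rw [demand_total hd E hunif M r, hRsum]
  -- ==================== STEP A : per-mafioso inequality ====================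
  have hkey : ∀ m ∈ M, ct m - fplus d E ct M r m ≤
      (if m ∈ M ∧ ct m < demand d E M r m then demand d E M r m - ct m else 0) := by
    intro m hm
    by_cases hU : ∃ S₀ ∈ E, m ∈ S₀ ∧ M ∩ S₀ = {m}
    · -- unique hitter : reallocation yields fplus ≥ ct
      obtain ⟨S₀, hS₀E, hmS₀, hMS₀⟩ := hU
      set r₀' : V → Finset V → ℝ := fun u Tc => if u = m then (if Tc = S₀ then 1 else 0) else r₀ u Tc
        with hr₀'
      have hr₀'nn : ∀ a b, 0 ≤ r₀' a b := by
        intro a b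
        simp only [hr₀']
        split_ifs
        · exact zero_le_one
        · exact le_refl 0
        · exact hr0 a b
      have hval' : ValidR0 E M r₀' := by
        refine ⟨hr₀'nn, ?_, ?_⟩
        · intro u Tc hcase
          simp only [hr₀']
          by_cases hum : u = m
          · subst hum
            rw [if_pos rfl, if_neg]
            intro hTS
            subst hTS
            rcases hcase with h | h | h
            · exact h hm
            · exact h hmS₀
            · exact h hS₀E
          · rw [if_neg hum]
            exact hrZ u Tc hcase
        · intro u hu
          simp only [hr₀']
          by_cases hum : u = m
          · subst hum
            have hcong : ∀ Tc ∈ E.filter (fun Tc => u ∈ Tc),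
                r₀' u Tc = if Tc = S₀ then (1:ℝ) else 0 := by
              intro Tc _
              simp only [hr₀', eq_self_iff_true, if_true]
            rw [Finset.sum_congr rfl hcong,
              Finset.sum_ite_eq' (E.filter (fun Tc => u ∈ Tc)) S₀ (fun _ => (1:ℝ)),
              if_pos (Finset.mem_filter.2 ⟨hS₀E, hmS₀⟩)]
          · simp only [if_neg hum]
            exact hrS u hu
      have hdev : Deviation m M M r₀ r₀' :=
        ⟨fun _ _ => Iff.rfl, fun u Tc hu => by simp only [hr₀', if_neg hu]⟩
      have key := hNashV m M r₀' hval' hdev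
      rw [mafioso_utility d E ct T M (fun a b => r₀' a b * ct a) m hm,
        mafioso_utility d E ct T M r m hm] at key
      have hD'm : demand d E M (fun a b => r₀' a b * ct a) m = demand d E M r m := by
        apply demand_eq_of d E M M r (fun a b => r₀' a b * ct a) m (fun S => rfl)
        intro u S hu
        simp only [hr₀', if_neg hu, hrdef]
      rw [hD'm] at key
      have hlow : ct m ≤ fplus d E ct M (fun a b => r₀' a b * ct a) m := by
        unfold fplus
        have hstep : ∀ S ∈ E.filter (fun S => m ∈ S),
            (if S = S₀ then ct m else 0) ≤
              ((fun a b => r₀' a b * ct a) m S / ((d:ℝ)-1)) *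
                ∑ u ∈ S.erase m, wt d E ct M (fun a b => r₀' a b * ct a) u := by
          intro S hSf
          obtain ⟨hSE, hmS⟩ := Finset.mem_filter.1 hSf
          by_cases hSS : S = S₀
          · subst hSS
            rw [if_pos rfl]
            have hwt1 : ∀ u ∈ S.erase m, wt d E ct M (fun a b => r₀' a b * ct a) u = 1 := by
              intro u hu
              obtain ⟨hum, huS⟩ := Finset.mem_erase.1 hu
              have huM : u ∉ M := by
                intro huM
                have hmem2 : u ∈ M ∩ S := Finset.mem_inter.2 ⟨huM, huS⟩
                rw [hMS₀, Finset.mem_singleton] at hmem2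
                exact hum hmem2
              unfold wt
              rw [if_neg]
              rintro ⟨h1, -⟩
              exact huM h1
            rw [Finset.sum_congr rfl hwt1, Finset.sum_const, nsmul_eq_mul, mul_one,
              Finset.card_erase_of_mem hmS, hunif S hSE,
              Nat.cast_sub (by omega : 1 ≤ d), Nat.cast_one]
            have hr1 : (fun a b => r₀' a b * ct a) m S = ct m := by
              simp only [hr₀', eq_self_iff_true, if_true, one_mul]
            rw [hr1, div_mul_cancel₀ _ hd1ne]
          · rw [if_neg hSS]
            apply mul_nonneg
            · apply div_nonneg _ hd1.le
              exact mul_nonneg (hr₀'nn m S) (hct0 m)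
            · exact Finset.sum_nonneg fun u _ => wt_nonneg hd E ct hct0 M _
                (fun a b => mul_nonneg (hr₀'nn a b) (hct0 a)) u
        calc ct m = ∑ S ∈ E.filter (fun S => m ∈ S), (if S = S₀ then ct m else 0) := by
              rw [Finset.sum_ite_eq' (E.filter (fun S => m ∈ S)) S₀ (fun _ => ct m),
                if_pos (Finset.mem_filter.2 ⟨hS₀E, hmS₀⟩)]
          _ ≤ _ := Finset.sum_le_sum hstep
      have hRHS0 : (0:ℝ) ≤ (if m ∈ M ∧ ct m < demand d E M r m
          then demand d E M r m - ct m else 0) := by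
        split_ifs with h
        · linarith [h.2]
        · exact le_refl 0
      linarith
    · -- not a unique hitter : leaving the mafia
      push_neg at hU
      set r₀' : V → Finset V → ℝ := fun u Tc => if u = m then 0 else r₀ u Tc with hr₀'
      have hval' : ValidR0 E (M.erase m) r₀' := by
        refine ⟨?_, ?_, ?_⟩
        · intro u Tc
          simp only [hr₀']
          split_ifs
          · exact le_refl 0
          · exact hr0 u Tc
        · intro u Tc hcase
          simp only [hr₀']
          by_cases hum : u = m
          · rw [if_pos hum]
          · rw [if_neg hum]
            apply hrZ
            rcases hcase with h | h | h
            · exact Or.inl fun huM => h (Finset.mem_erase.2 ⟨hum, huM⟩)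
            · exact Or.inr (Or.inl h)
            · exact Or.inr (Or.inr h)
        · intro u hu
          obtain ⟨hum, huM⟩ := Finset.mem_erase.1 hu
          simp only [hr₀', if_neg hum]
          exact hrS u huM
      have hdev : Deviation m M (M.erase m) r₀ r₀' := by
        constructor
        · intro u hu
          simp [Finset.mem_erase, hu]
        · intro u Tc hu
          simp only [hr₀', if_neg hu]
      have key := hNashV m (M.erase m) r₀' hval' hdev
      have hmM' : m ∉ M.erase m := Finset.notMem_erase m M
      have hpen : ¬∃ S ∈ E, m ∈ S ∧ (M.erase m) ∩ S = ∅ := by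
        rintro ⟨S, hSE, hmS, hemp⟩
        have hx : ((M ∩ S).erase m).Nonempty := by
          rw [Finset.nonempty_iff_ne_empty]
          intro h
          apply hU S hSE hmS
          have hsub' : M ∩ S ⊆ {m} := by
            intro u hu
            rw [Finset.mem_singleton]
            by_contra hum
            have hmem3 : u ∈ (M ∩ S).erase m := Finset.mem_erase.2 ⟨hum, hu⟩
            rw [h] at hmem3
            exact Finset.notMem_empty u hmem3
          exact (Finset.Nonempty.subset_singleton_iff (hHit S hSE)).1 hsub'
        obtain ⟨u, hu⟩ := hx
        obtain ⟨hum, huMS⟩ := Finset.mem_erase.1 hu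
        obtain ⟨huM, huS⟩ := Finset.mem_inter.1 huMS
        have hmem4 : u ∈ (M.erase m) ∩ S :=
          Finset.mem_inter.2 ⟨Finset.mem_erase.2 ⟨hum, huM⟩, huS⟩
        rw [hemp] at hmem4
        exact Finset.notMem_empty u hmem4
      have hL : vertexUtility d E ct T (M.erase m) (fun a b => r₀' a b * ct a) m
          = -demand d E (M.erase m) (fun a b => r₀' a b * ct a) m - 0 := by
        unfold vertexUtility
        rw [if_neg hmM', if_neg hpen]
      have hD' : demand d E (M.erase m) (fun a b => r₀' a b * ct a) m = demand d E M r m := by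
        apply demand_eq_of d E M (M.erase m) r (fun a b => r₀' a b * ct a) m
        · intro S
          ext u
          simp only [Finset.mem_erase, Finset.mem_inter]
          tauto
        · intro u S hu
          simp only [hr₀', if_neg hu, hrdef]
      rw [hL, hD', mafioso_utility d E ct T M r m hm] at key
      rcases lt_or_ge (ct m) (demand d E M r m) with hlt | hle
      · rw [if_pos ⟨hm, hlt⟩]
        rw [min_eq_right hlt.le] at key
        linarith
      · rw [if_neg (by rintro ⟨-, h2⟩; exact absurd h2 (not_lt.2 hle))]
        rw [min_eq_left hle] at key
        linarith
  -- ==================== STEP A : no protected agents ====================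
  have hEsum : ∑ m ∈ M, (ct m - fplus d E ct M r m)
      = ∑ m ∈ M, (if m ∈ M ∧ ct m < demand d E M r m then demand d E M r m - ct m else 0) := by
    have e2 := fplus_total (d := d) E ct M r
    have e3 : ∀ u : V, demand d E M r u - wt d E ct M r u * demand d E M r u
        = (if u ∈ M ∧ ct u < demand d E M r u then demand d E M r u - ct u else 0) := by
      intro u
      unfold wt
      split_ifs with h
      · have hDpos : 0 < demand d E M r u := lt_of_le_of_lt (hct0 u) h.2
        rw [div_mul_cancel₀ _ (ne_of_gt hDpos)]
      · rw [one_mul, sub_self]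
    have e4 : ∑ u : V, (if u ∈ M ∧ ct u < demand d E M r u then demand d E M r u - ct u else 0)
        = ∑ m ∈ M, (if m ∈ M ∧ ct m < demand d E M r m then demand d E M r m - ct m else 0) := by
      symm
      apply Finset.sum_subset (Finset.subset_univ M)
      intro u _ huM
      rw [if_neg]
      rintro ⟨h1, -⟩
      exact huM h1
    rw [Finset.sum_sub_distrib, e2, ← hDtot, ← Finset.sum_sub_distrib,
      Finset.sum_congr rfl (fun u _ => e3 u), e4]
  have hpoint : ∀ m ∈ M,
      (if m ∈ M ∧ ct m < demand d E M r m then demand d E M r m - ct m else 0)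
        - (ct m - fplus d E ct M r m) = 0 := by
    have hsz : ∑ m ∈ M, ((if m ∈ M ∧ ct m < demand d E M r m then demand d E M r m - ct m else 0)
        - (ct m - fplus d E ct M r m)) = 0 := by
      rw [Finset.sum_sub_distrib, ← hEsum, sub_self]
    intro m hm
    exact (Finset.sum_eq_zero_iff_of_nonneg (fun x hx => sub_nonneg.2 (hkey x hx))).1 hsz m hm
  have hPe : ∀ m ∈ M, demand d E M r m ≤ ct m := by
    by_contra hP
    push_neg at hP
    obtain ⟨u₀, hu₀M, hu₀⟩ := hP
    have hPne : (M.filter (fun u => ct u < demand d E M r u)).Nonempty :=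
      ⟨u₀, Finset.mem_filter.2 ⟨hu₀M, hu₀⟩⟩
    obtain ⟨us, husP, hmax⟩ := Finset.exists_max_image
      (M.filter (fun u => ct u < demand d E M r u))
      (fun u => (demand d E M r u - ct u) / demand d E M r u) hPne
    obtain ⟨husM, hus⟩ := Finset.mem_filter.1 husP
    have hDus : 0 < demand d E M r us := lt_of_le_of_lt (hct0 us) hus
    have hx0 : 0 < (demand d E M r us - ct us) / demand d E M r us :=
      div_pos (by linarith) hDus
    set x := (demand d E M r us - ct us) / demand d E M r us with hxdef
    have hwaste : ct us - fplus d E ct M r us ≤ x * ct us := by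
      have hctspell : ct us = ∑ S ∈ E.filter (fun S => us ∈ S), r us S := (hrsum us husM).symm
      have main : (∑ S ∈ E.filter (fun S => us ∈ S), r us S) - fplus d E ct M r us
          ≤ x * ∑ S ∈ E.filter (fun S => us ∈ S), r us S := by
        unfold fplus
        rw [← Finset.sum_sub_distrib, Finset.mul_sum]
        apply Finset.sum_le_sum
        intro S hSf
        obtain ⟨hSE, husS⟩ := Finset.mem_filter.1 hSf
        have hcard : ((S.erase us).card : ℝ) = (d:ℝ) - 1 := by
          rw [Finset.card_erase_of_mem husS, hunif S hSE,
            Nat.cast_sub (by omega : 1 ≤ d), Nat.cast_one]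
        have h5 : ∀ u ∈ S.erase us, 1 - x ≤ wt d E ct M r u := by
          intro u hu
          unfold wt
          split_ifs with hprot
          · have hDu : 0 < demand d E M r u := lt_of_le_of_lt (hct0 u) hprot.2
            have hmx := hmax u (Finset.mem_filter.2 hprot)
            rw [div_le_iff₀ hDu] at hmx
            rw [le_div_iff₀ hDu]
            nlinarith
          · linarith [hx0]
        have hsum5 : ((S.erase us).card : ℝ) * (1 - x) ≤ ∑ u ∈ S.erase us, wt d E ct M r u := by
          have h6 := Finset.card_nsmul_le_sum (S.erase us) (wt d E ct M r) (1 - x) h5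
          rwa [nsmul_eq_mul] at h6
        rw [hcard] at hsum5
        have hmul := mul_le_mul_of_nonneg_left hsum5 (div_nonneg (hr0' us S) hd1.le)
        have hid : r us S / ((d:ℝ)-1) * (((d:ℝ)-1) * (1 - x)) = r us S * (1 - x) := by
          field_simp
        rw [hid] at hmul
        nlinarith [hmul]
      calc ct us - fplus d E ct M r us
          = (∑ S ∈ E.filter (fun S => us ∈ S), r us S) - fplus d E ct M r us := by
            rw [← hctspell]
        _ ≤ x * ∑ S ∈ E.filter (fun S => us ∈ S), r us S := main
        _ = x * ct us := by rw [← hctspell]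
    have heq := hpoint us husM
    rw [if_pos ⟨husM, hus⟩] at heq
    have hxD : x * demand d E M r us = demand d E M r us - ct us := by
      rw [hxdef]
      exact div_mul_cancel₀ _ (ne_of_gt hDus)
    have h7 : x * demand d E M r us ≤ x * ct us := by linarith
    have h8 := le_of_mul_le_mul_left h7 hx0
    linarith
  -- ==================== STEP B : civilian demand bound ====================
  have hCiv : ∀ v, v ∉ M → ((d:ℝ) - 1) * demand d E M r v ≤ (d:ℝ) * ct v := by
    intro v hvM
    by_contra hcon
    push_neg at hcon
    have hDvpos : 0 < demand d E M r v := by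
      have h1 : 0 < ((d:ℝ)-1) * demand d E M r v :=
        lt_of_le_of_lt (mul_nonneg (by positivity) (hct0 v)) hcon
      nlinarith [hDnn v, hd1]
    have hctD : ct v < demand d E M r v := by
      nlinarith [hcon, hDvpos, hdR, hct0 v]
    obtain ⟨Dv, hDv⟩ : ∃ x : ℝ, x = demand d E M r v := ⟨_, rfl⟩
    rw [← hDv] at hDvpos hctD hcon
    have hDvne : Dv ≠ 0 := ne_of_gt hDvpos
    obtain ⟨r₀', hr₀'⟩ : ∃ f : V → Finset V → ℝ, f = fun u Tc =>
      (if u = v then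
        (if Tc ∈ E ∧ v ∈ Tc then
          ((1/((d:ℝ)-1)) * ∑ m' ∈ (M ∩ Tc).erase v, r m' Tc) / Dv
        else 0)
      else r₀ u Tc) := ⟨_, rfl⟩
    have hδ0 : ∀ Tc : Finset V, 0 ≤ (1/((d:ℝ)-1)) * ∑ m' ∈ (M ∩ Tc).erase v, r m' Tc :=
      fun Tc => mul_nonneg (by positivity) (Finset.sum_nonneg fun m' _ => hr0' m' Tc)
    have hδsum : ∑ S ∈ E.filter (fun S => v ∈ S),
        (1/((d:ℝ)-1)) * ∑ m' ∈ (M ∩ S).erase v, r m' S = Dv := by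
      rw [← Finset.mul_sum, hDv, demand_spell d E M r v]
    have hr₀'nn : ∀ a b, 0 ≤ r₀' a b := by
      intro a b
      simp only [hr₀']
      split_ifs
      · exact div_nonneg (hδ0 b) (le_of_lt hDvpos)
      · exact le_refl 0
      · exact hr0 a b
    have hval' : ValidR0 E (insert v M) r₀' := by
      refine ⟨hr₀'nn, ?_, ?_⟩
      · intro u Tc hcase
        simp only [hr₀']
        by_cases hum : u = v
        · subst hum
          rw [if_pos rfl, if_neg]
          rintro ⟨hTE, hvT⟩
          rcases hcase with h | h | h
          · exact h (Finset.mem_insert_self u M)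
          · exact h hvT
          · exact h hTE
        · rw [if_neg hum]
          apply hrZ
          rcases hcase with h | h | h
          · exact Or.inl fun huM => h (Finset.mem_insert_of_mem huM)
          · exact Or.inr (Or.inl h)
          · exact Or.inr (Or.inr h)
      · intro u hu
        by_cases hum : u = v
        · subst hum
          simp only [hr₀', if_pos rfl]
          have hcong : ∀ S ∈ E.filter (fun S => u ∈ S),
              (if S ∈ E ∧ u ∈ S then
                ((1/((d:ℝ)-1)) * ∑ m' ∈ (M ∩ S).erase u, r m' S) / Dv
              else 0)
              = ((1/((d:ℝ)-1)) * ∑ m' ∈ (M ∩ S).erase u, r m' S) / Dv := by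
            intro S hS
            obtain ⟨h1, h2⟩ := Finset.mem_filter.1 hS
            rw [if_pos ⟨h1, h2⟩]
          rw [Finset.sum_congr rfl hcong, ← Finset.sum_div, hδsum,
            div_self (ne_of_gt hDvpos)]
        · have huM : u ∈ M := by
            rcases Finset.mem_insert.1 hu with h | h
            · exact absurd h hum
            · exact h
          simp only [hr₀', if_neg hum]
          exact hrS u huM
    have hdev : Deviation v M (insert v M) r₀ r₀' := by
      constructor
      · intro u hu
        simp [Finset.mem_insert, hu]
      · intro u Tc hu
        simp only [hr₀', if_neg hu]
    have key := hNashV v (insert v M) r₀' hval' hdev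
    have hpen2 : ¬∃ S ∈ E, v ∈ S ∧ M ∩ S = ∅ := by
      rintro ⟨S, hSE, -, hS0⟩
      exact absurd hS0 (Finset.nonempty_iff_ne_empty.1 (hHit S hSE))
    have hold : vertexUtility d E ct T M r v = -Dv - 0 := by
      unfold vertexUtility
      rw [if_neg hvM, if_neg hpen2, hDv]
    rw [hold, mafioso_utility d E ct T (insert v M) (fun a b => r₀' a b * ct a) v
      (Finset.mem_insert_self v M)] at key
    have hMercase : ∀ S : Finset V, ((insert v M) ∩ S).erase v = (M ∩ S).erase v := by
      intro S
      ext u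
      simp only [Finset.mem_erase, Finset.mem_inter, Finset.mem_insert]
      constructor
      · rintro ⟨huv, hu | hu, huS⟩
        · exact absurd hu huv
        · exact ⟨huv, hu, huS⟩
      · rintro ⟨huv, huM, huS⟩
        exact ⟨huv, Or.inr huM, huS⟩
    have hD'v : demand d E (insert v M) (fun a b => r₀' a b * ct a) v = Dv := by
      rw [hDv]
      apply demand_eq_of d E M (insert v M) r (fun a b => r₀' a b * ct a) v hMercase
      intro u S hu
      simp only [hr₀', if_neg hu, hrdef]
    rw [hD'v, min_eq_right hctD.le] at key
    -- per-vertex weight bound after the deviation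
    have hwtkey : ∀ u, u ≠ v →
        1 - 1/((d:ℝ)-1) ≤ wt d E ct (insert v M) (fun a b => r₀' a b * ct a) u := by
      intro u huv
      have hinv : (0:ℝ) ≤ 1/((d:ℝ)-1) := by positivity
      unfold wt
      split_ifs with hprot
      · obtain ⟨huM', hlt⟩ := hprot
        have huM : u ∈ M := by
          rcases Finset.mem_insert.1 huM' with h | h
          · exact absurd h huv
          · exact h
        obtain ⟨A, hA⟩ : ∃ x : ℝ, x = ∑ Tc ∈ E.filter (fun Tc => u ∈ Tc ∧ v ∈ Tc),
          (1/((d:ℝ)-1)) * ∑ m' ∈ (M ∩ Tc).erase v, r m' Tc := ⟨_, rfl⟩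
        obtain ⟨ρ, hρ⟩ : ∃ x : ℝ, x = ∑ Tc ∈ E.filter (fun Tc => u ∈ Tc ∧ v ∈ Tc), r u Tc :=
          ⟨_, rfl⟩
        have hA0 : 0 ≤ A := by
          rw [hA]
          exact Finset.sum_nonneg fun Tc _ => hδ0 Tc
        have hper : ∀ Tc ∈ E.filter (fun Tc => u ∈ Tc),
            ∑ m' ∈ ((insert v M) ∩ Tc).erase u, (fun a b => r₀' a b * ct a) m' Tc
            = (∑ m' ∈ (M ∩ Tc).erase u, r m' Tc)
              + (if v ∈ Tc then
                  (((1/((d:ℝ)-1)) * ∑ m' ∈ (M ∩ Tc).erase v, r m' Tc) / Dv) * ct v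
                else 0) := by
          intro Tc hTf
          obtain ⟨hTE, huT⟩ := Finset.mem_filter.1 hTf
          by_cases hvT : v ∈ Tc
          · rw [if_pos hvT]
            have hset : ((insert v M) ∩ Tc).erase u = insert v ((M ∩ Tc).erase u) := by
              ext w
              simp only [Finset.mem_erase, Finset.mem_inter, Finset.mem_insert]
              constructor
              · rintro ⟨hwu, hw | hw, hwT⟩
                · exact Or.inl hw
                · exact Or.inr ⟨hwu, hw, hwT⟩
              · rintro (hw | ⟨hwu, hwM, hwT⟩)
                · subst hw
                  exact ⟨fun h => huv h.symm, Or.inl rfl, hvT⟩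
                · exact ⟨hwu, Or.inr hwM, hwT⟩
            have hvnm : v ∉ (M ∩ Tc).erase u := by
              intro hvmem
              exact hvM (Finset.mem_inter.1 (Finset.mem_of_mem_erase hvmem)).1
            rw [hset, Finset.sum_insert hvnm]
            have h1 : (fun a b => r₀' a b * ct a) v Tc
                = (((1/((d:ℝ)-1)) * ∑ m' ∈ (M ∩ Tc).erase v, r m' Tc) / Dv) * ct v := by
              simp only [hr₀', eq_self_iff_true, if_true]
              rw [if_pos ⟨hTE, hvT⟩]
            have h2 : ∀ m' ∈ (M ∩ Tc).erase u, (fun a b => r₀' a b * ct a) m' Tc = r m' Tc := by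
              intro m' hm'
              have hm'M : m' ∈ M := (Finset.mem_inter.1 (Finset.mem_of_mem_erase hm')).1
              have hm'v : m' ≠ v := fun h => hvM (h ▸ hm'M)
              simp only [hr₀', if_neg hm'v, hrdef]
            rw [h1, Finset.sum_congr rfl h2, add_comm]
          · rw [if_neg hvT, add_zero]
            have hset : ((insert v M) ∩ Tc).erase u = (M ∩ Tc).erase u := by
              ext w
              simp only [Finset.mem_erase, Finset.mem_inter, Finset.mem_insert]
              constructor
              · rintro ⟨hwu, hw | hw, hwT⟩
                · exact absurd (hw ▸ hwT) hvT
                · exact ⟨hwu, hw, hwT⟩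
              · rintro ⟨hwu, hwM, hwT⟩
                exact ⟨hwu, Or.inr hwM, hwT⟩
            rw [hset]
            apply Finset.sum_congr rfl
            intro m' hm'
            have hm'M : m' ∈ M := (Finset.mem_inter.1 (Finset.mem_of_mem_erase hm')).1
            have hm'v : m' ≠ v := fun h => hvM (h ▸ hm'M)
            simp only [hr₀', if_neg hm'v, hrdef]
        have hsum' : ∑ Tc ∈ E.filter (fun Tc => u ∈ Tc),
            ∑ m' ∈ ((insert v M) ∩ Tc).erase u, (fun a b => r₀' a b * ct a) m' Tc
            = (∑ Tc ∈ E.filter (fun Tc => u ∈ Tc), ∑ m' ∈ (M ∩ Tc).erase u, r m' Tc)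
              + (ct v / Dv) * A := by
          rw [Finset.sum_congr rfl hper, Finset.sum_add_distrib]
          congr 1
          rw [← Finset.sum_filter, Finset.filter_filter, hA, Finset.mul_sum]
          apply Finset.sum_congr rfl
          intro Tc _
          ring
        have hD'u : demand d E (insert v M) (fun a b => r₀' a b * ct a) u
            = demand d E M r u + (1/((d:ℝ)-1)) * ((ct v / Dv) * A) := by
          rw [demand_spell d E (insert v M) (fun a b => r₀' a b * ct a) u, hsum', mul_add,
            ← demand_spell d E M r u]
        have hDuct : demand d E M r u ≤ ct u := hPe u huM
        have hDu0 : 0 ≤ demand d E M r u := hDnn u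
        have hρct : ρ ≤ ct u := by
          rw [hρ, ← hrsum u huM]
          apply Finset.sum_le_sum_of_subset_of_nonneg
          · intro Tc hT
            obtain ⟨h1, h2, h3⟩ := Finset.mem_filter.1 hT
            exact Finset.mem_filter.2 ⟨h1, h2⟩
          · intro Tc _ _
            exact hr0' u Tc
        have hDuA : ((d:ℝ)-1) * A ≤ ((d:ℝ)-1) * demand d E M r u + ρ := by
          have hperT : ∀ Tc ∈ E.filter (fun Tc => u ∈ Tc ∧ v ∈ Tc),
              ((d:ℝ)-1) * ((1/((d:ℝ)-1)) * ∑ m' ∈ (M ∩ Tc).erase v, r m' Tc)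
              ≤ (∑ m' ∈ (M ∩ Tc).erase u, r m' Tc) + r u Tc := by
            intro Tc _
            rw [← mul_assoc, mul_one_div, div_self hd1ne, one_mul]
            calc ∑ m' ∈ (M ∩ Tc).erase v, r m' Tc
                ≤ (∑ m' ∈ ((M ∩ Tc).erase v).erase u, r m' Tc) + r u Tc :=
                  sum_le_sum_erase_add _ _ (fun m' => hr0' m' Tc) u
              _ ≤ (∑ m' ∈ (M ∩ Tc).erase u, r m' Tc) + r u Tc := by
                  apply add_le_add_left
                  apply Finset.sum_le_sum_of_subset_of_nonneg
                  · rw [Finset.erase_right_comm]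
                    exact Finset.erase_subset _ _
                  · intro m' _ _
                    exact hr0' m' Tc
          have h2 := Finset.sum_le_sum hperT
          rw [← Finset.mul_sum, ← hA, Finset.sum_add_distrib, ← hρ] at h2
          have h3 : ∑ Tc ∈ E.filter (fun Tc => u ∈ Tc ∧ v ∈ Tc),
              ∑ m' ∈ (M ∩ Tc).erase u, r m' Tc
              ≤ ((d:ℝ)-1) * demand d E M r u := by
            have h4 : ∑ Tc ∈ E.filter (fun Tc => u ∈ Tc), ∑ m' ∈ (M ∩ Tc).erase u, r m' Tc
                = ((d:ℝ)-1) * demand d E M r u := by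
              rw [demand_spell d E M r u, ← mul_assoc, mul_one_div, div_self hd1ne, one_mul]
            rw [← h4]
            apply Finset.sum_le_sum_of_subset_of_nonneg
            · intro Tc hT
              obtain ⟨h5, h6, h7⟩ := Finset.mem_filter.1 hT
              exact Finset.mem_filter.2 ⟨h5, h6⟩
            · intro Tc _ _
              exact Finset.sum_nonneg fun m' _ => hr0' m' Tc
          linarith
        obtain ⟨e, he⟩ : ∃ x : ℝ, x = (1/((d:ℝ)-1)) * ((ct v / Dv) * A) := ⟨_, rfl⟩
        rw [← he] at hD'u
        rw [hD'u] at hlt ⊢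
        have he0 : 0 ≤ e := by
          rw [he]
          exact mul_nonneg (by positivity)
            (mul_nonneg (div_nonneg (hct0 v) (le_of_lt hDvpos)) hA0)
        have hpos' : 0 < demand d E M r u + e := lt_of_le_of_lt (hct0 u) hlt
        rw [le_div_iff₀ hpos']
        have hred : ((d:ℝ)-2) * (demand d E M r u + e) ≤ ((d:ℝ)-1) * ct u := by
          have he' : ((d:ℝ)-1) * e * Dv = ct v * A := by
            rw [he]
            field_simp
          by_cases hcase : ((d:ℝ)-2) * e ≤ demand d E M r u
          · nlinarith [hcase, mul_le_mul_of_nonneg_left hDuct hd1.le]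
          · push_neg at hcase
            have hd2nn : (0:ℝ) ≤ (d:ℝ) - 2 := by linarith
            have hconle := le_of_lt hcon
            have w1 : (d:ℝ)*ct v*(((d:ℝ)-2)*A) ≤ ((d:ℝ)-1)*Dv*(((d:ℝ)-2)*A) :=
              mul_le_mul_of_nonneg_right hconle (mul_nonneg hd2nn hA0)
            have w2 : ((d:ℝ)-1)*Dv*(((d:ℝ)-2)*A) ≤ ((d:ℝ)-1)*Dv*(((d:ℝ)-1)*A) := by
              apply mul_le_mul_of_nonneg_left _ (mul_nonneg hd1.le hDvpos.le)
              exact mul_le_mul_of_nonneg_right (by linarith) hA0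
            have hDvD1 : 0 < ((d:ℝ)-1)*Dv := mul_pos hd1 hDvpos
            have w4 : (d:ℝ)*(((d:ℝ)-2)*e) ≤ ((d:ℝ)-1)*A := by
              rw [← mul_le_mul_iff_left₀ hDvD1]
              calc (d:ℝ)*(((d:ℝ)-2)*e)*(((d:ℝ)-1)*Dv)
                  = (d:ℝ)*((d:ℝ)-2)*(((d:ℝ)-1)*e*Dv) := by ring
                _ = (d:ℝ)*((d:ℝ)-2)*(ct v * A) := by rw [he']
                _ = (d:ℝ)*ct v*(((d:ℝ)-2)*A) := by ring
                _ ≤ ((d:ℝ)-1)*Dv*(((d:ℝ)-2)*A) := w1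
                _ ≤ ((d:ℝ)-1)*Dv*(((d:ℝ)-1)*A) := w2
                _ = ((d:ℝ)-1)*A*(((d:ℝ)-1)*Dv) := by ring
            have hS2 : ((d:ℝ)-2)*e ≤ ct u := by
              have h10 : ((d:ℝ)-1)*(demand d E M r u) ≤ ((d:ℝ)-1)*(((d:ℝ)-2)*e) :=
                mul_le_mul_of_nonneg_left hcase.le hd1.le
              nlinarith [hDuA, hρct, w4, h10]
            have h11 : ((d:ℝ)-2)*(demand d E M r u) ≤ ((d:ℝ)-2)*(((d:ℝ)-2)*e) :=
              mul_le_mul_of_nonneg_left hcase.le hd2nn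
            have h12 : ((d:ℝ)-1)*(((d:ℝ)-2)*e) ≤ ((d:ℝ)-1)*ct u :=
              mul_le_mul_of_nonneg_left hS2 hd1.le
            nlinarith [h11, h12]
        have h9 : (1 - 1/((d:ℝ)-1)) * (demand d E M r u + e)
            = (((d:ℝ)-2) * (demand d E M r u + e))/((d:ℝ)-1) := by
          rw [hfrac, div_mul_eq_mul_div]
        rw [h9, div_le_iff₀ hd1]
        nlinarith [hred, hct0 u, hd1]
      · linarith [hinv]
    -- aggregate lower bound on the deviator's income
    have hr'vS : ∀ S ∈ E.filter (fun S => v ∈ S),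
        (fun a b => r₀' a b * ct a) v S
        = (((1/((d:ℝ)-1)) * ∑ m' ∈ (M ∩ S).erase v, r m' S) / Dv) * ct v := by
      intro S hS
      obtain ⟨h1, h2⟩ := Finset.mem_filter.1 hS
      simp only [hr₀', eq_self_iff_true, if_true]
      rw [if_pos ⟨h1, h2⟩]
    have hr'sum : ∑ S ∈ E.filter (fun S => v ∈ S), (fun a b => r₀' a b * ct a) v S = ct v := by
      rw [Finset.sum_congr rfl hr'vS, ← Finset.sum_mul, ← Finset.sum_div, hδsum,
        div_self (ne_of_gt hDvpos), one_mul]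
    have hFlow : (((d:ℝ)-2)/((d:ℝ)-1)) * ct v
        ≤ fplus d E ct (insert v M) (fun a b => r₀' a b * ct a) v := by
      unfold fplus
      have hstep : ∀ S ∈ E.filter (fun S => v ∈ S),
          (fun a b => r₀' a b * ct a) v S * (((d:ℝ)-2)/((d:ℝ)-1))
          ≤ ((fun a b => r₀' a b * ct a) v S / ((d:ℝ)-1)) *
              ∑ u ∈ S.erase v, wt d E ct (insert v M) (fun a b => r₀' a b * ct a) u := by
        intro S hSf
        obtain ⟨hSE, hvS⟩ := Finset.mem_filter.1 hSf
        have hwt' : ∀ u ∈ S.erase v,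
            1 - 1/((d:ℝ)-1) ≤ wt d E ct (insert v M) (fun a b => r₀' a b * ct a) u :=
          fun u hu => hwtkey u (Finset.mem_erase.1 hu).1
        have hsum' : ((S.erase v).card : ℝ) * (1 - 1/((d:ℝ)-1))
            ≤ ∑ u ∈ S.erase v, wt d E ct (insert v M) (fun a b => r₀' a b * ct a) u := by
          have h6 := Finset.card_nsmul_le_sum (S.erase v) _ _ hwt'
          rwa [nsmul_eq_mul] at h6
        have hcard : ((S.erase v).card : ℝ) = (d:ℝ)-1 := by
          rw [Finset.card_erase_of_mem hvS, hunif S hSE,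
            Nat.cast_sub (by omega : 1 ≤ d), Nat.cast_one]
        rw [hcard] at hsum'
        have hrv0 : 0 ≤ (fun a b => r₀' a b * ct a) v S := mul_nonneg (hr₀'nn v S) (hct0 v)
        have hmul := mul_le_mul_of_nonneg_left hsum' (div_nonneg hrv0 hd1.le)
        have hid : (fun a b => r₀' a b * ct a) v S / ((d:ℝ)-1) * (((d:ℝ)-1) * (1 - 1/((d:ℝ)-1)))
            = (fun a b => r₀' a b * ct a) v S * (((d:ℝ)-2)/((d:ℝ)-1)) := by
          rw [hfrac2, div_mul_eq_mul_div, mul_div_assoc]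
        rw [hid] at hmul
        exact hmul
      have h20 := Finset.sum_le_sum hstep
      rw [← Finset.sum_mul, hr'sum] at h20
      calc (((d:ℝ)-2)/((d:ℝ)-1)) * ct v = ct v * (((d:ℝ)-2)/((d:ℝ)-1)) := by ring
        _ ≤ _ := h20
    have hfin : (((d:ℝ)-2)/((d:ℝ)-1)) * ct v ≤ 2 * ct v - Dv := by linarith
    rw [div_mul_eq_mul_div, div_le_iff₀ hd1] at hfin
    nlinarith [hfin, hcon]
  -- ==================== PART 3 : counting ====================
  refine ⟨hHit, hsumM, ?_⟩
  intro Mstar hMstar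
  by_cases hE0 : E = ∅
  · have h0 : ∑ m ∈ M, ct m = 0 := by
      rw [← hRsum, hE0, Finset.sum_empty]
    have h1 : C M = 0 := by rw [← hsumM, h0]
    rw [h1]
    have h2 : 0 ≤ C Mstar := by
      rw [← hempty]
      exact hmono (Finset.empty_subset Mstar)
    exact mul_nonneg (by positivity) h2
  · obtain ⟨S₀, hS₀⟩ := Finset.nonempty_iff_ne_empty.2 hE0
    have hS₀ne : S₀.Nonempty := by
      rw [← Finset.card_pos, hunif S₀ hS₀]; omega
    obtain ⟨v₀, _⟩ := hS₀ne
    have hsel' : ∀ S ∈ E, ∃ w, w ∈ Mstar ∧ w ∈ S := by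
      intro S hS
      obtain ⟨w, hw⟩ := hMstar S hS
      exact ⟨w, (Finset.mem_inter.1 hw).1, (Finset.mem_inter.1 hw).2⟩
    set sel : Finset V → V := fun S => if h : S ∈ E then Classical.choose (hsel' S h) else v₀
      with hseldef
    have hselM : ∀ S ∈ E, sel S ∈ Mstar := by
      intro S hS
      simp only [hseldef]
      rw [dif_pos hS]
      exact (Classical.choose_spec (hsel' S hS)).1
    have hselS : ∀ S ∈ E, sel S ∈ S := by
      intro S hS
      simp only [hseldef]
      rw [dif_pos hS]
      exact (Classical.choose_spec (hsel' S hS)).2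
    have hfib : ∑ y ∈ Mstar, ∑ S ∈ E.filter (fun S => sel S = y), ∑ m ∈ M ∩ S, r m S
        = ∑ S ∈ E, ∑ m ∈ M ∩ S, r m S :=
      Finset.sum_fiberwise_of_maps_to hselM (fun S => ∑ m ∈ M ∩ S, r m S)
    have hper : ∀ y ∈ Mstar,
        ∑ S ∈ E.filter (fun S => sel S = y), ∑ m ∈ M ∩ S, r m S ≤ (d:ℝ) * ct y := by
      intro y hy
      have hsubf : E.filter (fun S => sel S = y) ⊆ E.filter (fun S => y ∈ S) := by
        intro S hS
        obtain ⟨h1, h2⟩ := Finset.mem_filter.1 hS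
        exact Finset.mem_filter.2 ⟨h1, h2 ▸ hselS S h1⟩
      have hdin : ∑ S ∈ E.filter (fun S => sel S = y), ∑ m ∈ (M ∩ S).erase y, r m S
          ≤ ((d:ℝ)-1) * demand d E M r y := by
        have h4 : ∑ S ∈ E.filter (fun S => y ∈ S), ∑ m ∈ (M ∩ S).erase y, r m S
            = ((d:ℝ)-1) * demand d E M r y := by
          rw [demand_spell d E M r y, ← mul_assoc, mul_one_div, div_self hd1ne, one_mul]
        rw [← h4]
        apply Finset.sum_le_sum_of_subset_of_nonneg hsubf
        intro S _ _
        exact Finset.sum_nonneg fun m _ => hr0' m S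
      by_cases hyM : y ∈ M
      · have h5 : ∀ S ∈ E.filter (fun S => sel S = y), ∑ m ∈ M ∩ S, r m S
            ≤ (∑ m ∈ (M ∩ S).erase y, r m S) + r y S := fun S _ =>
          sum_le_sum_erase_add (M ∩ S) (fun m => r m S) (fun m => hr0' m S) y
        have h6 : ∑ S ∈ E.filter (fun S => sel S = y), r y S ≤ ct y := by
          rw [← hrsum y hyM]
          apply Finset.sum_le_sum_of_subset_of_nonneg hsubf
          intro S _ _
          exact hr0' y S
        have h7 := Finset.sum_le_sum h5
        rw [Finset.sum_add_distrib] at h7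
        have h9 : ((d:ℝ)-1) * demand d E M r y ≤ ((d:ℝ)-1) * ct y :=
          mul_le_mul_of_nonneg_left (hPe y hyM) hd1.le
        nlinarith [h7, hdin, h6, h9]
      · have h5 : ∀ S ∈ E.filter (fun S => sel S = y), ∑ m ∈ M ∩ S, r m S
            = ∑ m ∈ (M ∩ S).erase y, r m S := by
          intro S _
          rw [Finset.erase_eq_of_notMem]
          intro h
          exact hyM (Finset.mem_inter.1 h).1
        rw [Finset.sum_congr rfl h5]
        have h10 := hCiv y hyM
        nlinarith [hdin, h10]
    have hMstarle : ∑ y ∈ Mstar, ct y ≤ C Mstar := by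
      by_cases hMu : Mstar = Finset.univ
      · subst hMu
        exact le_of_eq hctU
      · exact hctZ Mstar hMu
    calc C M = ∑ m ∈ M, ct m := hsumM.symm
      _ = ∑ S ∈ E, ∑ m ∈ M ∩ S, r m S := hRsum.symm
      _ = ∑ y ∈ Mstar, ∑ S ∈ E.filter (fun S => sel S = y), ∑ m ∈ M ∩ S, r m S := hfib.symm
      _ ≤ ∑ y ∈ Mstar, (d:ℝ) * ct y := Finset.sum_le_sum hper
      _ = (d:ℝ) * ∑ y ∈ Mstar, ct y := by rw [Finset.mul_sum]
      _ ≤ (d:ℝ) * C Mstar := mul_le_mul_of_nonneg_left hMstarle (by positivity)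


end
end MafiaSub
end
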